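/- Let λ be an ordinal, μ a cardinal, τ a finite relational vocabulary, and ⊛ a quantifier-free sum-like binary operation on τ-structures. If L is one of the logics tΣ_{∞,λ}[μ] or tΠ_{∞,λ}[μ] over τ (the unions of tΣ_{κ,λ}[μ], resp. tΠ_{κ,λ}[μ], over all infinite cardinals κ), then for every L sentence φ there is an L reduction sequence that is a Feferman–Vaught decomposition of φ over ⊛. -/

import Mathlib

namespace FV

open Cardinal

/-- A (finite) relational vocabulary: a type of relation symbols with arities. -/
structure Vocab : Type 1 where
  Rel : Type
  arity : Rel → ℕ

/-- A structure over a relational vocabulary. -/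
structure Struc (τ : Vocab) : Type 1 where
  carrier : Type
  rel : ∀ R : τ.Rel, (Fin (τ.arity R) → carrier) → Prop

/-- Infinitary formulae in negation normal form over a relational vocabulary,
with free variables among `Fin n`. -/
inductive Formula (τ : Vocab) : ℕ → Type 1 where
  | tru {n : ℕ} : Formula τ n
  | fls {n : ℕ} : Formula τ n
  | rel {n : ℕ} (R : τ.Rel) (ts : Fin (τ.arity R) → Fin n) : Formula τ n
  | nrel {n : ℕ} (R : τ.Rel) (ts : Fin (τ.arity R) → Fin n) : Formula τ n
  | eq {n : ℕ} (i j : Fin n) : Formula τ n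
  | neq {n : ℕ} (i j : Fin n) : Formula τ n
  | iAnd {n : ℕ} (I : Type) (f : I → Formula τ n) : Formula τ n
  | iOr {n : ℕ} (I : Type) (f : I → Formula τ n) : Formula τ n
  | ex {n : ℕ} (φ : Formula τ (n+1)) : Formula τ n
  | all {n : ℕ} (φ : Formula τ (n+1)) : Formula τ n

/-- Binary conjunction (a conjunction of arity 2). -/
def Formula.and {τ : Vocab} {n : ℕ} (φ ψ : Formula τ n) : Formula τ n :=
  Formula.iAnd Bool (fun b => if b then φ else ψ)

/-- Binary disjunction (a disjunction of arity 2). -/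
def Formula.or {τ : Vocab} {n : ℕ} (φ ψ : Formula τ n) : Formula τ n :=
  Formula.iOr Bool (fun b => if b then φ else ψ)

/-- Quantifier-free formulae (in NNF, with finite conjunctions/disjunctions). -/
inductive IsQF {τ : Vocab} : ∀ {n : ℕ}, Formula τ n → Prop where
  | tru {n : ℕ} : IsQF (Formula.tru (τ := τ) (n := n))
  | fls {n : ℕ} : IsQF (Formula.fls (τ := τ) (n := n))
  | rel {n : ℕ} (R : τ.Rel) (ts : Fin (τ.arity R) → Fin n) : IsQF (Formula.rel R ts)
  | nrel {n : ℕ} (R : τ.Rel) (ts : Fin (τ.arity R) → Fin n) : IsQF (Formula.nrel R ts)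
  | eq {n : ℕ} (i j : Fin n) : IsQF (Formula.eq (τ := τ) i j)
  | neq {n : ℕ} (i j : Fin n) : IsQF (Formula.neq (τ := τ) i j)
  | iAnd {n : ℕ} (I : Type) (hI : Finite I) (f : I → Formula τ n)
      (h : ∀ i, IsQF (f i)) : IsQF (Formula.iAnd I f)
  | iOr {n : ℕ} (I : Type) (hI : Finite I) (f : I → Formula τ n)
      (h : ∀ i, IsQF (f i)) : IsQF (Formula.iOr I f)

/-- Satisfaction of a formula in a structure under an assignment. -/
def Sat {τ : Vocab} (A : Struc τ) : ∀ {n : ℕ}, Formula τ n → (Fin n → A.carrier) → Prop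
  | _, .tru, _ => True
  | _, .fls, _ => False
  | _, .rel R ts, v => A.rel R (fun i => v (ts i))
  | _, .nrel R ts, v => ¬ A.rel R (fun i => v (ts i))
  | _, .eq i j, v => v i = v j
  | _, .neq i j, v => v i ≠ v j
  | _, .iAnd I f, v => ∀ i : I, Sat A (f i) v
  | _, .iOr I f, v => ∃ i : I, Sat A (f i) v
  | _, .ex φ, v => ∃ a, Sat A φ (Fin.snoc v a)
  | _, .all φ, v => ∀ a, Sat A φ (Fin.snoc v a)

/-- The empty assignment. -/
def emptyA {α : Type} : Fin 0 → α := fun i => i.elim0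

/-- The (quantifier) rank of a formula: the supremum of the number of quantifiers
on any root-to-leaf path of its parse tree. -/
noncomputable def rank {τ : Vocab} : ∀ {n : ℕ}, Formula τ n → Cardinal
  | _, .iAnd I f => ⨆ i : I, rank (f i)
  | _, .iOr I f => ⨆ i : I, rank (f i)
  | _, .ex φ => rank φ + 1
  | _, .all φ => rank φ + 1
  | _, _ => 0

/-- The size of a formula (number of nodes of its parse tree), as a cardinal. -/
noncomputable def sizeC {τ : Vocab} : ∀ {n : ℕ}, Formula τ n → Cardinal
  | _, .iAnd I f => 1 + Cardinal.sum (fun i : I => sizeC (f i))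
  | _, .iOr I f => 1 + Cardinal.sum (fun i : I => sizeC (f i))
  | _, .ex φ => 1 + sizeC φ
  | _, .all φ => 1 + sizeC φ
  | _, _ => 1

mutual
/-- The class tΣ_{κ,λ} of formulae. -/
inductive TSigma (τ : Vocab) (κ : Cardinal) : Ordinal → ∀ {n : ℕ}, Formula τ n → Prop where
  | qf {n : ℕ} {φ : Formula τ n} : IsQF φ → TSigma τ κ 0 φ
  | conj {n : ℕ} {lam : Ordinal} (I : Type) (f : I → Formula τ n)
      (hI : Cardinal.mk I < κ) (lam' : I → Ordinal) (hlt : ∀ i, lam' i < lam)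
      (h : ∀ i, TPi τ κ (lam' i) (f i)) : TSigma τ κ lam (Formula.iAnd I f)
  | ex {n : ℕ} {lam : Ordinal} {φ : Formula τ (n+1)} :
      TSigma τ κ lam φ → TSigma τ κ lam (Formula.ex φ)

/-- The class tΠ_{κ,λ} of formulae. -/
inductive TPi (τ : Vocab) (κ : Cardinal) : Ordinal → ∀ {n : ℕ}, Formula τ n → Prop where
  | qf {n : ℕ} {φ : Formula τ n} : IsQF φ → TPi τ κ 0 φ
  | disj {n : ℕ} {lam : Ordinal} (I : Type) (f : I → Formula τ n)
      (hI : Cardinal.mk I < κ) (lam' : I → Ordinal) (hlt : ∀ i, lam' i < lam)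
      (h : ∀ i, TSigma τ κ (lam' i) (f i)) : TPi τ κ lam (Formula.iOr I f)
  | all {n : ℕ} {lam : Ordinal} {φ : Formula τ (n+1)} :
      TPi τ κ lam φ → TPi τ κ lam (Formula.all φ)
end

/-- tΣ_{∞,λ}: union of tΣ_{κ,λ} over all infinite cardinals κ. -/
def TSigmaInf (τ : Vocab) (lam : Ordinal) {n : ℕ} (φ : Formula τ n) : Prop :=
  ∃ κ : Cardinal, ℵ₀ ≤ κ ∧ TSigma τ κ lam φ

/-- tΠ_{∞,λ}: union of tΠ_{κ,λ} over all infinite cardinals κ. -/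
def TPiInf (τ : Vocab) (lam : Ordinal) {n : ℕ} (φ : Formula τ n) : Prop :=
  ∃ κ : Cardinal, ℵ₀ ≤ κ ∧ TPi τ κ lam φ

/-- The λ-fold exponential `tower` function (taking suprema at limits). -/
noncomputable def towerC (κ : Cardinal) (l : Ordinal) : Cardinal :=
  Ordinal.limitRecOn l κ (fun _ ih => (2 : Cardinal) ^ ih)
    (fun o _ ih => ⨆ i : {o' : Ordinal // o' < o}, ih i.1 i.2)

/-- The n-fold exponential `tower` function on naturals. -/
def towerN : ℕ → Cardinal → Cardinal
  | 0, k => k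
  | n+1, k => (2 : Cardinal) ^ towerN n k

open Classical in
/-- ρ(κ,λ) = tower(λ,κ) if κ > ω, else ω. -/
noncomputable def rho (κ : Cardinal) (lam : Ordinal) : Cardinal :=
  if ℵ₀ < κ then towerC κ lam else ℵ₀

/-- ∞-propositional formulae over a set `V` of propositional variables. -/
inductive PropForm (V : Type) : Type 1 where
  | var (v : V) : PropForm V
  | not (p : PropForm V) : PropForm V
  | iAnd (I : Type) (f : I → PropForm V) : PropForm V
  | iOr (I : Type) (f : I → PropForm V) : PropForm V

/-- Binary conjunction of propositional formulae. -/
def PropForm.and {V : Type} (p q : PropForm V) : PropForm V :=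
  PropForm.iAnd Bool (fun b => if b then p else q)

/-- Binary disjunction of propositional formulae. -/
def PropForm.or {V : Type} (p q : PropForm V) : PropForm V :=
  PropForm.iOr Bool (fun b => if b then p else q)

/-- Evaluation of an ∞-propositional formula under an assignment. -/
def PropForm.eval {V : Type} (ζ : V → Bool) : PropForm V → Prop
  | .var v => ζ v = true
  | .not p => ¬ PropForm.eval ζ p
  | .iAnd _ f => ∀ i, PropForm.eval ζ (f i)
  | .iOr _ f => ∃ i, PropForm.eval ζ (f i)

/-- Negation-free ∞-propositional formulae. -/
inductive PropForm.NegFree {V : Type} : PropForm V → Prop where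
  | var (v : V) : PropForm.NegFree (.var v)
  | iAnd (I : Type) (f : I → PropForm V) (h : ∀ i, PropForm.NegFree (f i)) :
      PropForm.NegFree (.iAnd I f)
  | iOr (I : Type) (f : I → PropForm V) (h : ∀ i, PropForm.NegFree (f i)) :
      PropForm.NegFree (.iOr I f)

/-- Finitary (ordinary) propositional formulae. -/
inductive PropForm.Finitary {V : Type} : PropForm V → Prop where
  | var (v : V) : PropForm.Finitary (.var v)
  | not (p : PropForm V) (h : PropForm.Finitary p) : PropForm.Finitary (.not p)
  | iAnd (I : Type) (hI : Finite I) (f : I → PropForm V)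
      (h : ∀ i, PropForm.Finitary (f i)) : PropForm.Finitary (.iAnd I f)
  | iOr (I : Type) (hI : Finite I) (f : I → PropForm V)
      (h : ∀ i, PropForm.Finitary (f i)) : PropForm.Finitary (.iOr I f)

/-- Size of an ∞-propositional formula. -/
noncomputable def PropForm.size {V : Type} : PropForm V → Cardinal
  | .var _ => 1
  | .not p => 1 + PropForm.size p
  | .iAnd I f => 1 + Cardinal.sum (fun i : I => PropForm.size (f i))
  | .iOr I f => 1 + Cardinal.sum (fun i : I => PropForm.size (f i))

/-- A reduction sequence `D(x̄₁, x̄₂) = (Δ₁(x̄₁), Δ₂(x̄₂), β)` over τ. -/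
structure RedSeq (τ : Vocab) (r₁ r₂ : ℕ) : Type 1 where
  I : Type
  Δ₁ : I → Formula τ r₁
  Δ₂ : I → Formula τ r₂
  β : PropForm (I × Fin 2)

/-- `(A₁, A₂, ā₁, ā₂)` is a model of the reduction sequence `D`. -/
def RedSeq.Models {τ : Vocab} {r₁ r₂ : ℕ} (D : RedSeq τ r₁ r₂) (A₁ A₂ : Struc τ)
    (a₁ : Fin r₁ → A₁.carrier) (a₂ : Fin r₂ → A₂.carrier) : Prop :=
  ∃ ζ : D.I × Fin 2 → Bool, D.β.eval ζ ∧
    (∀ i : D.I, (ζ (i, 0) = true ↔ Sat A₁ (D.Δ₁ i) a₁)) ∧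
    (∀ i : D.I, (ζ (i, 1) = true ↔ Sat A₂ (D.Δ₂ i) a₂))

/-- Size of a reduction sequence. -/
noncomputable def RedSeq.size {τ : Vocab} {r₁ r₂ : ℕ} (D : RedSeq τ r₁ r₂) : Cardinal :=
  Cardinal.sum (fun i : D.I => sizeC (D.Δ₁ i)) +
    Cardinal.sum (fun i : D.I => sizeC (D.Δ₂ i)) + D.β.size

/-- The vocabulary τ̱ = τ ∪ {P} for a new unary predicate P (represented by `none`). -/
def annotV (τ : Vocab) : Vocab where
  Rel := Option τ.Rel
  arity := fun R => match R with
    | none => 1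
    | some S => τ.arity S

/-- The annotated disjoint union of two τ-structures: their disjoint union,
expanded by interpreting the new unary predicate P as the universe of the first. -/
def adu {τ : Vocab} (A₁ A₂ : Struc τ) : Struc (annotV τ) where
  carrier := A₁.carrier ⊕ A₂.carrier
  rel := fun R => match R with
    | none => fun v => (v ⟨0, Nat.one_pos⟩).isLeft = true
    | some S => fun v =>
        (∃ w : Fin (τ.arity S) → A₁.carrier, A₁.rel S w ∧ v = fun i => Sum.inl (w i)) ∨
        (∃ w : Fin (τ.arity S) → A₂.carrier, A₂.rel S w ∧ v = fun i => Sum.inr (w i))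

/-- `D` is a Feferman–Vaught decomposition of `φ(x̄₁,x̄₂)` over annotated disjoint union. -/
def FVDecompADU {τ : Vocab} {r₁ r₂ : ℕ} (φ : Formula (annotV τ) (r₁ + r₂))
    (D : RedSeq τ r₁ r₂) : Prop :=
  ∀ (A₁ A₂ : Struc τ) (a₁ : Fin r₁ → A₁.carrier) (a₂ : Fin r₂ → A₂.carrier),
    Sat (adu A₁ A₂) φ (Fin.append (fun i => Sum.inl (a₁ i)) (fun i => Sum.inr (a₂ i)))
      ↔ D.Models A₁ A₂ a₁ a₂

/-- `D` is a Feferman–Vaught decomposition of the sentence `φ` over the binary operation `op`. -/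
def FVDecompOp {τ : Vocab} (op : Struc τ → Struc τ → Struc τ) (φ : Formula τ 0)
    (D : RedSeq τ 0 0) : Prop :=
  ∀ A₁ A₂ : Struc τ, Sat (op A₁ A₂) φ emptyA ↔ D.Models A₁ A₂ emptyA emptyA

/-- A quantifier-free scalar (σ,τ)-interpretation. -/
structure QFInterp (σ τ : Vocab) : Type 1 where
  xiU : Formula σ 1
  xiR : ∀ R : τ.Rel, Formula σ (τ.arity R)
  hU : IsQF xiU
  hR : ∀ R : τ.Rel, IsQF (xiR R)

/-- The τ-structure interpreted in a σ-structure by a quantifier-free interpretation. -/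
def QFInterp.app {σ τ : Vocab} (Ξ : QFInterp σ τ) (A : Struc σ) : Struc τ where
  carrier := { a : A.carrier // Sat A Ξ.xiU (fun _ => a) }
  rel := fun R v => Sat A (Ξ.xiR R) (fun i => (v i).1)

/-- The quantifier-free sum-like binary operation defined by a (τ̱,τ)-interpretation. -/
def sumLike {τ : Vocab} (Ξ : QFInterp (annotV τ) τ) (A₁ A₂ : Struc τ) : Struc τ :=
  Ξ.app (adu A₁ A₂)


/-- Relabelling of free variables. -/
def relabel {τ : Vocab} : ∀ {m n : ℕ}, (Fin m → Fin n) → Formula τ m → Formula τ n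
  | _, _, _, .tru => .tru
  | _, _, _, .fls => .fls
  | _, _, g, .rel R ts => .rel R (fun i => g (ts i))
  | _, _, g, .nrel R ts => .nrel R (fun i => g (ts i))
  | _, _, g, .eq i j => .eq (g i) (g j)
  | _, _, g, .neq i j => .neq (g i) (g j)
  | _, _, g, .iAnd I f => .iAnd I (fun i => relabel g (f i))
  | _, _, g, .iOr I f => .iOr I (fun i => relabel g (f i))
  | _, _, g, .ex φ => .ex (relabel (Fin.snoc (fun i => Fin.castSucc (g i)) (Fin.last _)) φ)
  | _, _, g, .all φ => .all (relabel (Fin.snoc (fun i => Fin.castSucc (g i)) (Fin.last _)) φ)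

/-- Negation, in negation normal form. -/
def nnfNeg {τ : Vocab} : ∀ {n : ℕ}, Formula τ n → Formula τ n
  | _, .tru => .fls
  | _, .fls => .tru
  | _, .rel R ts => .nrel R ts
  | _, .nrel R ts => .rel R ts
  | _, .eq i j => .neq i j
  | _, .neq i j => .eq i j
  | _, .iAnd I f => .iOr I (fun i => nnfNeg (f i))
  | _, .iOr I f => .iAnd I (fun i => nnfNeg (f i))
  | _, .ex φ => .all (nnfNeg φ)
  | _, .all φ => .ex (nnfNeg φ)

/-- Finite conjunction of a tuple of formulae. -/
def finAnd {τ : Vocab} {n : ℕ} : ∀ {r : ℕ}, (Fin r → Formula τ n) → Formula τ n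
  | 0, _ => .tru
  | r+1, f => (finAnd (fun i => f (Fin.castSucc i))).and (f (Fin.last r))

/-- A block of `k` existential quantifiers. -/
def exBlock {τ : Vocab} : ∀ (k : ℕ) {r : ℕ}, Formula τ (r + k) → Formula τ r
  | 0, _, φ => φ
  | k+1, _, φ => exBlock k (Formula.ex φ)

/-- A block of `k` universal quantifiers. -/
def allBlock {τ : Vocab} : ∀ (k : ℕ) {r : ℕ}, Formula τ (r + k) → Formula τ r
  | 0, _, φ => φ
  | k+1, _, φ => allBlock k (Formula.all φ)

mutual
/-- The class tΣ_{(n,k)}: tΣ_n formulae all of whose quantifier blocks have length exactly k. -/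
inductive SigNK (τ : Vocab) (k : ℕ) : ℕ → ∀ {r : ℕ}, Formula τ r → Prop where
  | qf {r : ℕ} {φ : Formula τ r} : IsQF φ → SigNK τ k 0 φ
  | blk {r n : ℕ} (hn : 0 < n) (I : Type) (hI : Finite I) (f : I → Formula τ (r + k))
      (n' : I → ℕ) (hlt : ∀ i, n' i < n) (h : ∀ i, PiNK τ k (n' i) (f i)) :
      SigNK τ k n (exBlock k (Formula.iAnd I f))
/-- The class tΠ_{(n,k)}: tΠ_n formulae all of whose quantifier blocks have length exactly k. -/
inductive PiNK (τ : Vocab) (k : ℕ) : ℕ → ∀ {r : ℕ}, Formula τ r → Prop where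
  | qf {r : ℕ} {φ : Formula τ r} : IsQF φ → PiNK τ k 0 φ
  | blk {r n : ℕ} (hn : 0 < n) (I : Type) (hI : Finite I) (f : I → Formula τ (r + k))
      (n' : I → ℕ) (hlt : ∀ i, n' i < n) (h : ∀ i, SigNK τ k (n' i) (f i)) :
      PiNK τ k n (allBlock k (Formula.iOr I f))
end

/-- Partial isomorphism condition on a pair of tuples. -/
def PIso {τ : Vocab} (A₁ A₂ : Struc τ) (r : ℕ)
    (a₁ : Fin r → A₁.carrier) (a₂ : Fin r → A₂.carrier) : Prop :=
  (∀ i j : Fin r, a₁ i = a₁ j ↔ a₂ i = a₂ j) ∧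
  (∀ (R : τ.Rel) (ts : Fin (τ.arity R) → Fin r),
      A₁.rel R (fun l => a₁ (ts l)) ↔ A₂.rel R (fun l => a₂ (ts l)))

/-- The Duplicator has a winning strategy in the (n,k)-prefix game on the ordered pair
((A₁,ā₁),(A₂,ā₂)): in odd rounds the Spoiler picks a k-tuple in A₁ (and the Duplicator
answers in A₂), in even rounds the roles of the structures are swapped; the Duplicator wins
a play if the chosen tuples collectively form a partial isomorphism. -/
def DWinPrefix {τ : Vocab} (k : ℕ) : ℕ → (A₁ A₂ : Struc τ) → (r : ℕ) →
    (Fin r → A₁.carrier) → (Fin r → A₂.carrier) → Prop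
  | 0, A₁, A₂, r, a₁, a₂ => PIso A₁ A₂ r a₁ a₂
  | n+1, A₁, A₂, r, a₁, a₂ =>
      ∀ b₁ : Fin k → A₁.carrier, ∃ b₂ : Fin k → A₂.carrier,
        DWinPrefix k n A₂ A₁ (r + k) (Fin.append a₂ b₂) (Fin.append a₁ b₁)

/-- The Duplicator has a winning strategy in the (n,k)-tree-prefix game on the set
{(A₁,ā₁),(A₂,ā₂)}: in the first round the Spoiler picks a k-tuple in either structure, and
thereafter in the structure in which the Duplicator chose in the previous round. -/
def DWinTree {τ : Vocab} (k : ℕ) : ℕ → (A₁ A₂ : Struc τ) → (r : ℕ) →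
    (Fin r → A₁.carrier) → (Fin r → A₂.carrier) → Prop
  | 0, A₁, A₂, r, a₁, a₂ => PIso A₁ A₂ r a₁ a₂
  | n+1, A₁, A₂, r, a₁, a₂ =>
      (∀ b₁ : Fin k → A₁.carrier, ∃ b₂ : Fin k → A₂.carrier,
        DWinPrefix k n A₂ A₁ (r + k) (Fin.append a₂ b₂) (Fin.append a₁ b₁)) ∧
      (∀ b₂ : Fin k → A₂.carrier, ∃ b₁ : Fin k → A₁.carrier,
        DWinPrefix k n A₁ A₂ (r + k) (Fin.append a₁ b₁) (Fin.append a₂ b₂))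

/-- (A₁,ā₁) ⇛_{(n,k)} (A₂,ā₂) : every tΣ_{(n,k)} formula true of (A₁,ā₁) is true of (A₂,ā₂). -/
def TransferNK {τ : Vocab} (n k : ℕ) (A₁ A₂ : Struc τ) (r : ℕ)
    (a₁ : Fin r → A₁.carrier) (a₂ : Fin r → A₂.carrier) : Prop :=
  ∀ φ : Formula τ r, SigNK τ k n φ → Sat A₁ φ a₁ → Sat A₂ φ a₂

/-- (A₁,ā₁) ≡_{(n,k)} (A₂,ā₂) : agreement on all tΣ_{(n,k)} formulae. -/
def EquivNK {τ : Vocab} (n k : ℕ) (A₁ A₂ : Struc τ) (r : ℕ)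
    (a₁ : Fin r → A₁.carrier) (a₂ : Fin r → A₂.carrier) : Prop :=
  ∀ φ : Formula τ r, SigNK τ k n φ → (Sat A₁ φ a₁ ↔ Sat A₂ φ a₂)

namespace QFInterp

variable {σ τ : Vocab}

/-- The universe formula ξ_U applied at variable `i`. -/
def uAt (Ξ : QFInterp σ τ) {n : ℕ} (i : Fin n) : Formula σ n :=
  relabel (fun _ : Fin 1 => i) Ξ.xiU

/-- The universe formula ξ_U applied at the last (just-quantified) variable. -/
def uLast (Ξ : QFInterp σ τ) {n : ℕ} : Formula σ (n+1) :=
  Ξ.uAt (Fin.last n)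

/-- Close a pending quantifier-block guard. -/
def closeG {n : ℕ} : Option (Bool × Formula σ n) → Formula σ n → Formula σ n
  | none, r => r
  | some (true, g), r => g.and r
  | some (false, g), r => g.or r

/-- Block-wise translation Ξ(φ) of a formula under a quantifier-free interpretation,
with an accumulator carrying the pending universe-guard of the current quantifier block:
Ξ(R(z̄)) = ξ_R(z̄) ∧ ⋀ᵢ ξ_U(zᵢ); Ξ(¬R(z̄)) = ¬ξ_R(z̄) ∧ ⋀ᵢ ξ_U(zᵢ) (¬ξ_R in NNF);
Ξ commutes with conjunctions and disjunctions; Ξ(∃x̄ ⋀ᵢφᵢ) = ∃x̄(⋀ⱼ ξ_U(xⱼ) ∧ ⋀ᵢΞ(φᵢ));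
Ξ(∀x̄ ⋁ᵢφᵢ) = ∀x̄((⋁ⱼ ¬ξ_U(xⱼ)) ∨ ⋁ᵢΞ(φᵢ)) (¬ξ_U in NNF). -/
def trA (Ξ : QFInterp σ τ) : ∀ {n : ℕ}, Option (Bool × Formula σ n) → Formula τ n → Formula σ n
  | _, mode, .tru => closeG mode .tru
  | _, mode, .fls => closeG mode .fls
  | _, mode, .rel R ts =>
      closeG mode ((relabel ts (Ξ.xiR R)).and (finAnd (fun i => Ξ.uAt (ts i))))
  | _, mode, .nrel R ts =>
      closeG mode ((nnfNeg (relabel ts (Ξ.xiR R))).and (finAnd (fun i => Ξ.uAt (ts i))))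
  | _, mode, .eq i j => closeG mode ((Formula.eq i j).and ((Ξ.uAt i).and (Ξ.uAt j)))
  | _, mode, .neq i j => closeG mode ((Formula.neq i j).and ((Ξ.uAt i).and (Ξ.uAt j)))
  | _, some (true, g), .iAnd I f =>
      .iAnd (Option I) (fun o => o.elim g (fun i => Ξ.trA none (f i)))
  | _, some (false, g), .iOr I f =>
      .iOr (Option I) (fun o => o.elim g (fun i => Ξ.trA none (f i)))
  | _, mode, .iAnd I f => closeG mode (.iAnd I (fun i => Ξ.trA none (f i)))
  | _, mode, .iOr I f => closeG mode (.iOr I (fun i => Ξ.trA none (f i)))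
  | _, some (true, g), .ex φ =>
      .ex (Ξ.trA (some (true, (relabel Fin.castSucc g).and Ξ.uLast)) φ)
  | _, some (false, g), .all φ =>
      .all (Ξ.trA (some (false, (relabel Fin.castSucc g).or (nnfNeg Ξ.uLast))) φ)
  | _, mode, .ex φ => closeG mode (.ex (Ξ.trA (some (true, Ξ.uLast)) φ))
  | _, mode, .all φ => closeG mode (.all (Ξ.trA (some (false, nnfNeg Ξ.uLast)) φ))

/-- The translation Ξ(φ) of a formula. -/
def translate (Ξ : QFInterp σ τ) {n : ℕ} (φ : Formula τ n) : Formula σ n :=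
  Ξ.trA none φ

/-- The size |Ξ| of an interpretation: the sum of the sizes of its formulae. -/
noncomputable def size [Fintype τ.Rel] (Ξ : QFInterp σ τ) : Cardinal :=
  sizeC Ξ.xiU + ∑ R : τ.Rel, sizeC (Ξ.xiR R)

end QFInterp



/- ===================== Auxiliary development ===================== -/

section Basics
variable {τ : Vocab}

@[simp] lemma sat_tru {A : Struc τ} {n} {v : Fin n → A.carrier} : Sat A Formula.tru v ↔ True := Iff.rfl
@[simp] lemma sat_fls {A : Struc τ} {n} {v : Fin n → A.carrier} : Sat A Formula.fls v ↔ False := Iff.rfl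
@[simp] lemma sat_rel {A : Struc τ} {n} {R} {ts : Fin (τ.arity R) → Fin n} {v : Fin n → A.carrier} :
    Sat A (Formula.rel R ts) v ↔ A.rel R (fun i => v (ts i)) := Iff.rfl
@[simp] lemma sat_nrel {A : Struc τ} {n} {R} {ts : Fin (τ.arity R) → Fin n} {v : Fin n → A.carrier} :
    Sat A (Formula.nrel R ts) v ↔ ¬ A.rel R (fun i => v (ts i)) := Iff.rfl
@[simp] lemma sat_eq {A : Struc τ} {n} {i j : Fin n} {v : Fin n → A.carrier} :
    Sat A (Formula.eq i j) v ↔ v i = v j := Iff.rfl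
@[simp] lemma sat_neq {A : Struc τ} {n} {i j : Fin n} {v : Fin n → A.carrier} :
    Sat A (Formula.neq i j) v ↔ v i ≠ v j := Iff.rfl
@[simp] lemma sat_iAnd {A : Struc τ} {n} {I : Type} {f : I → Formula τ n} {v : Fin n → A.carrier} :
    Sat A (Formula.iAnd I f) v ↔ ∀ i, Sat A (f i) v := Iff.rfl
@[simp] lemma sat_iOr {A : Struc τ} {n} {I : Type} {f : I → Formula τ n} {v : Fin n → A.carrier} :
    Sat A (Formula.iOr I f) v ↔ ∃ i, Sat A (f i) v := Iff.rfl
@[simp] lemma sat_ex {A : Struc τ} {n} {φ : Formula τ (n+1)} {v : Fin n → A.carrier} :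
    Sat A (Formula.ex φ) v ↔ ∃ a, Sat A φ (Fin.snoc v a) := Iff.rfl
@[simp] lemma sat_all {A : Struc τ} {n} {φ : Formula τ (n+1)} {v : Fin n → A.carrier} :
    Sat A (Formula.all φ) v ↔ ∀ a, Sat A φ (Fin.snoc v a) := Iff.rfl

@[simp] lemma sat_and {A : Struc τ} {n} {φ ψ : Formula τ n} {v : Fin n → A.carrier} :
    Sat A (φ.and ψ) v ↔ Sat A φ v ∧ Sat A ψ v := by
  constructor
  · intro h; exact ⟨h true, h false⟩
  · rintro ⟨h1, h2⟩ b; cases b <;> simpa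

@[simp] lemma sat_or {A : Struc τ} {n} {φ ψ : Formula τ n} {v : Fin n → A.carrier} :
    Sat A (φ.or ψ) v ↔ Sat A φ v ∨ Sat A ψ v := by
  constructor
  · rintro ⟨b, hb⟩; cases b
    · exact Or.inr (by simpa using hb)
    · exact Or.inl (by simpa using hb)
  · rintro (h | h)
    · exact ⟨true, by simpa⟩
    · exact ⟨false, by simpa⟩

lemma sat_nnfNeg {A : Struc τ} : ∀ {n} (φ : Formula τ n) (v : Fin n → A.carrier),
    Sat A (nnfNeg φ) v ↔ ¬ Sat A φ v := by
  intro n φ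
  induction φ with
  | tru => intro v; simp [nnfNeg]
  | fls => intro v; simp [nnfNeg]
  | rel R ts => intro v; simp [nnfNeg]
  | nrel R ts => intro v; simp [nnfNeg]
  | eq i j => intro v; simp [nnfNeg]
  | neq i j => intro v; simp [nnfNeg]
  | iAnd I f ih => intro v; simp [nnfNeg, ih]
  | iOr I f ih => intro v; simp [nnfNeg, ih]
  | ex φ ih => intro v; simp [nnfNeg, ih]
  | all φ ih => intro v; simp [nnfNeg, ih]

@[simp] lemma rank_tru {n} : rank (Formula.tru (τ := τ) (n := n)) = 0 := rfl
@[simp] lemma rank_fls {n} : rank (Formula.fls (τ := τ) (n := n)) = 0 := rfl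
@[simp] lemma rank_rel {n R} {ts : Fin (τ.arity R) → Fin n} : rank (Formula.rel R ts) = 0 := rfl
@[simp] lemma rank_nrel {n R} {ts : Fin (τ.arity R) → Fin n} : rank (Formula.nrel R ts) = 0 := rfl
@[simp] lemma rank_eq {n} {i j : Fin n} : rank (Formula.eq (τ := τ) i j) = 0 := rfl
@[simp] lemma rank_neq {n} {i j : Fin n} : rank (Formula.neq (τ := τ) i j) = 0 := rfl
@[simp] lemma rank_iAnd {n} {I : Type} {f : I → Formula τ n} :
    rank (Formula.iAnd I f) = ⨆ i, rank (f i) := rfl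
@[simp] lemma rank_iOr {n} {I : Type} {f : I → Formula τ n} :
    rank (Formula.iOr I f) = ⨆ i, rank (f i) := rfl
@[simp] lemma rank_ex {n} {φ : Formula τ (n+1)} : rank (Formula.ex φ) = rank φ + 1 := rfl
@[simp] lemma rank_all {n} {φ : Formula τ (n+1)} : rank (Formula.all φ) = rank φ + 1 := rfl

lemma ciSup_zero_card {I : Type} : (⨆ _ : I, (0 : Cardinal)) = 0 :=
  le_antisymm (ciSup_le' fun _ => le_rfl) zero_le

lemma rank_nnfNeg : ∀ {n} (φ : Formula τ n), rank (nnfNeg φ) = rank φ := by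
  intro n φ
  induction φ with
  | tru => rfl
  | fls => rfl
  | rel R ts => rfl
  | nrel R ts => rfl
  | eq i j => rfl
  | neq i j => rfl
  | iAnd I f ih => simp only [nnfNeg, rank_iOr, rank_iAnd]; exact congrArg _ (funext fun i => ih i)
  | iOr I f ih => simp only [nnfNeg, rank_iAnd, rank_iOr]; exact congrArg _ (funext fun i => ih i)
  | ex φ ih => simp [nnfNeg, ih]
  | all φ ih => simp [nnfNeg, ih]

lemma IsQF.rank_zero : ∀ {n} {φ : Formula τ n}, IsQF φ → rank φ = 0 := by
  intro n φ h
  induction h with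
  | tru => rfl
  | fls => rfl
  | rel R ts => rfl
  | nrel R ts => rfl
  | eq i j => rfl
  | neq i j => rfl
  | iAnd I hI f hf ih => simp only [rank_iAnd]; simp only [ih]; exact ciSup_zero_card
  | iOr I hI f hf ih => simp only [rank_iOr]; simp only [ih]; exact ciSup_zero_card

lemma sat_relabel {A : Struc τ} : ∀ {m} (φ : Formula τ m) {n} (g : Fin m → Fin n)
    (v : Fin n → A.carrier), Sat A (relabel g φ) v ↔ Sat A φ (v ∘ g) := by
  intro m φ
  induction φ with
  | tru => intro n g v; simp [relabel]
  | fls => intro n g v; simp [relabel]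
  | rel R ts => intro n g v; simp [relabel]
  | nrel R ts => intro n g v; simp [relabel]
  | eq i j => intro n g v; simp [relabel]
  | neq i j => intro n g v; simp [relabel]
  | iAnd I f ih => intro n g v; simp [relabel, ih]
  | iOr I f ih => intro n g v; simp [relabel, ih]
  | ex φ ih =>
      intro n g v
      simp only [relabel, sat_ex]
      refine exists_congr fun a => ?_
      rw [ih]
      have : (Fin.snoc v a ∘ Fin.snoc (fun i => Fin.castSucc (g i)) (Fin.last n)) =
          Fin.snoc (v ∘ g) a := by
        funext i
        refine Fin.lastCases ?_ (fun j => ?_) i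
        · simp
        · simp [Fin.snoc_castSucc]
      rw [this]
  | all φ ih =>
      intro n g v
      simp only [relabel, sat_all]
      refine forall_congr' fun a => ?_
      rw [ih]
      have : (Fin.snoc v a ∘ Fin.snoc (fun i => Fin.castSucc (g i)) (Fin.last n)) =
          Fin.snoc (v ∘ g) a := by
        funext i
        refine Fin.lastCases ?_ (fun j => ?_) i
        · simp
        · simp [Fin.snoc_castSucc]
      rw [this]

lemma rank_relabel : ∀ {m} (φ : Formula τ m) {n} (g : Fin m → Fin n),
    rank (relabel g φ) = rank φ := by
  intro m φ
  induction φ with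
  | tru => intro n g; rfl
  | fls => intro n g; rfl
  | rel R ts => intro n g; rfl
  | nrel R ts => intro n g; rfl
  | eq i j => intro n g; rfl
  | neq i j => intro n g; rfl
  | iAnd I f ih => intro n g; simp only [relabel, rank_iAnd]; exact congrArg _ (funext fun i => ih i _)
  | iOr I f ih => intro n g; simp only [relabel, rank_iOr]; exact congrArg _ (funext fun i => ih i _)
  | ex φ ih => intro n g; simp only [relabel, rank_ex, ih]
  | all φ ih => intro n g; simp only [relabel, rank_all, ih]

lemma IsQF.relabel : ∀ {m} {φ : Formula τ m}, IsQF φ → ∀ {n} (g : Fin m → Fin n),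
    IsQF (FV.relabel g φ) := by
  intro m φ h
  induction h with
  | tru => intro n g; exact IsQF.tru
  | fls => intro n g; exact IsQF.fls
  | rel R ts => intro n g; exact IsQF.rel _ _
  | nrel R ts => intro n g; exact IsQF.nrel _ _
  | eq i j => intro n g; exact IsQF.eq _ _
  | neq i j => intro n g; exact IsQF.neq _ _
  | iAnd I hI f hf ih => intro n g; exact IsQF.iAnd I hI _ (fun i => ih i g)
  | iOr I hI f hf ih => intro n g; exact IsQF.iOr I hI _ (fun i => ih i g)

lemma IsQF.nnfNeg : ∀ {m} {φ : Formula τ m}, IsQF φ → IsQF (FV.nnfNeg φ) := by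
  intro m φ h
  induction h with
  | tru => exact IsQF.fls
  | fls => exact IsQF.tru
  | rel R ts => exact IsQF.nrel _ _
  | nrel R ts => exact IsQF.rel _ _
  | eq i j => exact IsQF.neq _ _
  | neq i j => exact IsQF.eq _ _
  | iAnd I hI f hf ih => exact IsQF.iOr I hI _ ih
  | iOr I hI f hf ih => exact IsQF.iAnd I hI _ ih

lemma IsQF.and {n} {φ ψ : Formula τ n} (h1 : IsQF φ) (h2 : IsQF ψ) : IsQF (φ.and ψ) :=
  IsQF.iAnd Bool inferInstance _ (fun b => by cases b <;> simpa)

lemma sat_exBlock {A : Struc τ} : ∀ (k : ℕ) {r} (θ : Formula τ (r+k)) (v : Fin r → A.carrier),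
    Sat A (exBlock k θ) v ↔ ∃ w : Fin k → A.carrier, Sat A θ (Fin.append v w) := by
  intro k
  induction k with
  | zero =>
      intro r θ v
      constructor
      · intro h; exact ⟨Fin.elim0, by rwa [Fin.append_elim0]⟩
      · rintro ⟨w, hw⟩
        have : w = Fin.elim0 := funext fun i => i.elim0
        rw [this, Fin.append_elim0] at hw
        exact hw
  | succ k ih =>
      intro r θ v
      show Sat A (exBlock k (Formula.ex θ)) v ↔ _
      rw [ih]
      constructor
      · rintro ⟨w, a, ha⟩
        exact ⟨Fin.snoc w a, by rwa [Fin.append_snoc]⟩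
      · rintro ⟨w, hw⟩
        refine ⟨Fin.init w, w (Fin.last k), ?_⟩
        rw [← Fin.append_snoc, Fin.snoc_init_self]
        exact hw

lemma rank_exBlock : ∀ (k : ℕ) {r} (θ : Formula τ (r+k)),
    rank (exBlock k θ) = rank θ + k := by
  intro k
  induction k with
  | zero => intro r θ; simp [exBlock]
  | succ k ih =>
      intro r θ
      show rank (exBlock k (Formula.ex θ)) = _
      rw [ih, rank_ex]
      push_cast
      ring

lemma TSigma.exBlock' {κ lam} : ∀ (k : ℕ) {r} {θ : Formula τ (r+k)},
    TSigma τ κ lam θ → TSigma τ κ lam (exBlock k θ) := by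
  intro k
  induction k with
  | zero => intro r θ h; exact h
  | succ k ih => intro r θ h; exact ih (TSigma.ex h)

lemma classMono : ∀ {n} (φ : Formula τ n) {κ κ' : Cardinal} {lam : Ordinal}, κ ≤ κ' →
    (TSigma τ κ lam φ → TSigma τ κ' lam φ) ∧ (TPi τ κ lam φ → TPi τ κ' lam φ) := by
  intro n φ
  induction φ with
  | tru => intro κ κ' lam hle; exact ⟨fun h => by cases h with | qf h => exact TSigma.qf h,
      fun h => by cases h with | qf h => exact TPi.qf h⟩
  | fls => intro κ κ' lam hle; exact ⟨fun h => by cases h with | qf h => exact TSigma.qf h,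
      fun h => by cases h with | qf h => exact TPi.qf h⟩
  | rel R ts => intro κ κ' lam hle; exact ⟨fun h => by cases h with | qf h => exact TSigma.qf h,
      fun h => by cases h with | qf h => exact TPi.qf h⟩
  | nrel R ts => intro κ κ' lam hle; exact ⟨fun h => by cases h with | qf h => exact TSigma.qf h,
      fun h => by cases h with | qf h => exact TPi.qf h⟩
  | eq i j => intro κ κ' lam hle; exact ⟨fun h => by cases h with | qf h => exact TSigma.qf h,
      fun h => by cases h with | qf h => exact TPi.qf h⟩
  | neq i j => intro κ κ' lam hle; exact ⟨fun h => by cases h with | qf h => exact TSigma.qf h,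
      fun h => by cases h with | qf h => exact TPi.qf h⟩
  | iAnd I f ih =>
      intro κ κ' lam hle
      constructor
      · intro h
        cases h with
        | qf h => exact TSigma.qf h
        | conj I f hI lam' hlt h =>
            exact TSigma.conj I f (lt_of_lt_of_le hI hle) lam' hlt
              (fun i => ((ih i) hle).2 (h i))
      · intro h
        cases h with
        | qf h => exact TPi.qf h
  | iOr I f ih =>
      intro κ κ' lam hle
      constructor
      · intro h
        cases h with
        | qf h => exact TSigma.qf h
      · intro h
        cases h with
        | qf h => exact TPi.qf h
        | disj I f hI lam' hlt h =>
            exact TPi.disj I f (lt_of_lt_of_le hI hle) lam' hlt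
              (fun i => ((ih i) hle).1 (h i))
  | ex φ ih =>
      intro κ κ' lam hle
      constructor
      · intro h
        cases h with
        | qf h => cases h
        | ex h => exact TSigma.ex ((ih hle).1 h)
      · intro h
        cases h with
        | qf h => cases h
  | all φ ih =>
      intro κ κ' lam hle
      constructor
      · intro h
        cases h with
        | qf h => cases h
      · intro h
        cases h with
        | qf h => cases h
        | all h => exact TPi.all ((ih hle).2 h)

lemma classDual : ∀ {n} (φ : Formula τ n) {κ : Cardinal} {lam : Ordinal},
    (TSigma τ κ lam φ → TPi τ κ lam (nnfNeg φ)) ∧ (TPi τ κ lam φ → TSigma τ κ lam (nnfNeg φ)) := by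
  intro n φ
  induction φ with
  | tru => intro κ lam; exact ⟨fun h => by cases h with | qf h => exact TPi.qf h.nnfNeg,
      fun h => by cases h with | qf h => exact TSigma.qf h.nnfNeg⟩
  | fls => intro κ lam; exact ⟨fun h => by cases h with | qf h => exact TPi.qf h.nnfNeg,
      fun h => by cases h with | qf h => exact TSigma.qf h.nnfNeg⟩
  | rel R ts => intro κ lam; exact ⟨fun h => by cases h with | qf h => exact TPi.qf h.nnfNeg,
      fun h => by cases h with | qf h => exact TSigma.qf h.nnfNeg⟩
  | nrel R ts => intro κ lam; exact ⟨fun h => by cases h with | qf h => exact TPi.qf h.nnfNeg,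
      fun h => by cases h with | qf h => exact TSigma.qf h.nnfNeg⟩
  | eq i j => intro κ lam; exact ⟨fun h => by cases h with | qf h => exact TPi.qf h.nnfNeg,
      fun h => by cases h with | qf h => exact TSigma.qf h.nnfNeg⟩
  | neq i j => intro κ lam; exact ⟨fun h => by cases h with | qf h => exact TPi.qf h.nnfNeg,
      fun h => by cases h with | qf h => exact TSigma.qf h.nnfNeg⟩
  | iAnd I f ih =>
      intro κ lam
      constructor
      · intro h
        cases h with
        | qf h => exact TPi.qf h.nnfNeg
        | conj I f hI lam' hlt h =>
            exact TPi.disj I _ hI lam' hlt (fun i => (ih i).2 (h i))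
      · intro h
        cases h with
        | qf h => exact TSigma.qf h.nnfNeg
  | iOr I f ih =>
      intro κ lam
      constructor
      · intro h
        cases h with
        | qf h => exact TPi.qf h.nnfNeg
      · intro h
        cases h with
        | qf h => exact TSigma.qf h.nnfNeg
        | disj I f hI lam' hlt h =>
            exact TSigma.conj I _ hI lam' hlt (fun i => (ih i).1 (h i))
  | ex φ ih =>
      intro κ lam
      constructor
      · intro h
        cases h with
        | qf h => cases h
        | ex h => exact TPi.all ((ih).1 h)
      · intro h
        cases h with
        | qf h => cases h
  | all φ ih =>
      intro κ lam
      constructor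
      · intro h
        cases h with
        | qf h => cases h
      · intro h
        cases h with
        | qf h => cases h
        | all h => exact TSigma.ex ((ih).2 h)

lemma classRelabel : ∀ {n} (φ : Formula τ n) {κ : Cardinal} {lam : Ordinal} {m} (g : Fin n → Fin m),
    (TSigma τ κ lam φ → TSigma τ κ lam (relabel g φ)) ∧
    (TPi τ κ lam φ → TPi τ κ lam (relabel g φ)) := by
  intro n φ
  induction φ with
  | tru => intro κ lam m g; exact ⟨fun h => by cases h with | qf h => exact TSigma.qf (h.relabel g),
      fun h => by cases h with | qf h => exact TPi.qf (h.relabel g)⟩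
  | fls => intro κ lam m g; exact ⟨fun h => by cases h with | qf h => exact TSigma.qf (h.relabel g),
      fun h => by cases h with | qf h => exact TPi.qf (h.relabel g)⟩
  | rel R ts => intro κ lam m g; exact ⟨fun h => by cases h with | qf h => exact TSigma.qf (h.relabel g),
      fun h => by cases h with | qf h => exact TPi.qf (h.relabel g)⟩
  | nrel R ts => intro κ lam m g; exact ⟨fun h => by cases h with | qf h => exact TSigma.qf (h.relabel g),
      fun h => by cases h with | qf h => exact TPi.qf (h.relabel g)⟩
  | eq i j => intro κ lam m g; exact ⟨fun h => by cases h with | qf h => exact TSigma.qf (h.relabel g),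
      fun h => by cases h with | qf h => exact TPi.qf (h.relabel g)⟩
  | neq i j => intro κ lam m g; exact ⟨fun h => by cases h with | qf h => exact TSigma.qf (h.relabel g),
      fun h => by cases h with | qf h => exact TPi.qf (h.relabel g)⟩
  | iAnd I f ih =>
      intro κ lam m g
      constructor
      · intro h
        cases h with
        | qf h => exact TSigma.qf (h.relabel g)
        | conj I f hI lam' hlt h =>
            exact TSigma.conj I _ hI lam' hlt (fun i => ((ih i) g).2 (h i))
      · intro h
        cases h with
        | qf h => exact TPi.qf (h.relabel g)
  | iOr I f ih =>
      intro κ lam m g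
      constructor
      · intro h
        cases h with
        | qf h => exact TSigma.qf (h.relabel g)
      · intro h
        cases h with
        | qf h => exact TPi.qf (h.relabel g)
        | disj I f hI lam' hlt h =>
            exact TPi.disj I _ hI lam' hlt (fun i => ((ih i) g).1 (h i))
  | ex φ ih =>
      intro κ lam m g
      constructor
      · intro h
        cases h with
        | qf h => cases h
        | ex h => exact TSigma.ex ((ih _).1 h)
      · intro h
        cases h with
        | qf h => cases h
  | all φ ih =>
      intro κ lam m g
      constructor
      · intro h
        cases h with
        | qf h => cases h
      · intro h
        cases h with
        | qf h => cases h
        | all h => exact TPi.all ((ih _).2 h)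

end Basics


section Atoms
variable {τ : Vocab}

/-- The atoms over `τ` with variables among `Fin r`. -/
def Atom (τ : Vocab) (r : ℕ) : Type := (Σ R : τ.Rel, (Fin (τ.arity R) → Fin r)) ⊕ (Fin r × Fin r)

instance [Fintype τ.Rel] {r : ℕ} : Finite (Atom τ r) := by
  unfold Atom
  infer_instance

def atomF {r : ℕ} : Atom τ r → Formula τ r
  | .inl ⟨R, ts⟩ => .rel R ts
  | .inr (i, j) => .eq i j

def atomNF {r : ℕ} : Atom τ r → Formula τ r
  | .inl ⟨R, ts⟩ => .nrel R ts
  | .inr (i, j) => .neq i j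

lemma isQF_atomF {r} (a : Atom τ r) : IsQF (atomF a) := by
  rcases a with ⟨R, ts⟩ | ⟨i, j⟩
  · exact IsQF.rel _ _
  · exact IsQF.eq _ _

lemma isQF_atomNF {r} (a : Atom τ r) : IsQF (atomNF a) := by
  rcases a with ⟨R, ts⟩ | ⟨i, j⟩
  · exact IsQF.nrel _ _
  · exact IsQF.neq _ _

lemma sat_atomNF {A : Struc τ} {r} {v : Fin r → A.carrier} (a : Atom τ r) :
    Sat A (atomNF a) v ↔ ¬ Sat A (atomF a) v := by
  rcases a with ⟨R, ts⟩ | ⟨i, j⟩ <;> simp [atomF, atomNF]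

/-- The atomic diagram of a tuple. -/
noncomputable def diag (A : Struc τ) {r} (v : Fin r → A.carrier) : Atom τ r → Bool :=
  fun a => @ite _ (Sat A (atomF a) v) (Classical.propDecidable _) true false

lemma diag_eq_true_iff {A : Struc τ} {r} {v : Fin r → A.carrier} {a : Atom τ r} :
    diag A v a = true ↔ Sat A (atomF a) v := by
  unfold diag
  split <;> simp [*]

/-- The complete diagram formula of an atomic valuation. -/
noncomputable def decodeVal {r : ℕ} (d : Atom τ r → Bool) : Formula τ r :=
  Formula.iAnd (Atom τ r) (fun a => if d a then atomF a else atomNF a)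

lemma isQF_decodeVal [Fintype τ.Rel] {r} (d : Atom τ r → Bool) : IsQF (decodeVal d) := by
  refine IsQF.iAnd _ inferInstance _ (fun a => ?_)
  split
  · exact isQF_atomF a
  · exact isQF_atomNF a

lemma rank_decodeVal [Fintype τ.Rel] {r} (d : Atom τ r → Bool) : rank (decodeVal d) = 0 :=
  (isQF_decodeVal d).rank_zero

lemma sat_decodeVal {A : Struc τ} {r} {v : Fin r → A.carrier} (d : Atom τ r → Bool) :
    Sat A (decodeVal d) v ↔ diag A v = d := by
  unfold decodeVal
  rw [sat_iAnd, funext_iff]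
  refine forall_congr' fun a => ?_
  rcases hd : d a with _ | _
  · rw [if_neg (by simp), sat_atomNF, ← diag_eq_true_iff, Bool.not_eq_true]
  · rw [if_pos rfl]
    exact diag_eq_true_iff.symm

lemma diag_eq_qf {A B : Struc τ} {r} {v : Fin r → A.carrier} {w : Fin r → B.carrier}
    (hd : diag A v = diag B w) :
    ∀ {φ : Formula τ r}, IsQF φ → (Sat A φ v ↔ Sat B φ w) := by
  have hat : ∀ a : Atom τ r, Sat A (atomF a) v ↔ Sat B (atomF a) w := by
    intro a
    rw [← diag_eq_true_iff, ← diag_eq_true_iff, congrFun hd a]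
  intro φ h
  induction h with
  | tru => simp
  | fls => simp
  | rel R ts => exact hat (.inl ⟨R, ts⟩)
  | nrel R ts => exact not_congr (hat (.inl ⟨R, ts⟩))
  | eq i j => exact hat (.inr (i, j))
  | neq i j => exact not_congr (hat (.inr (i, j)))
  | iAnd I hI f hf ih => simpa using forall_congr' ih
  | iOr I hI f hf ih => simpa using exists_congr ih

end Atoms

section CardAux

lemma iSup_add_le_card {I : Type} (f : I → Cardinal) (kk mu : Cardinal) (hk : kk ≤ mu)
    (h : ∀ i, f i + kk ≤ mu) : (⨆ i, f i) + kk ≤ mu := by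
  rcases isEmpty_or_nonempty I with hE | hNE
  · rw [ciSup_of_empty f]
    simpa using hk
  · have hsup : (⨆ i, f i) ≤ mu :=
      ciSup_le' fun i => le_trans (self_le_add_right _ _) (h i)
    rcases le_or_gt ℵ₀ mu with hmu | hmu
    · calc (⨆ i, f i) + kk ≤ mu + mu := add_le_add hsup hk
        _ = mu := Cardinal.add_eq_self hmu
    · obtain ⟨m, rfl⟩ := Cardinal.lt_aleph0.1 hmu
      obtain ⟨k0, rfl⟩ := Cardinal.lt_aleph0.1 (lt_of_le_of_lt hk hmu)
      have hk0m : k0 ≤ m := by exact_mod_cast hk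
      have hb : ∀ i, f i ≤ ((m - k0 : ℕ) : Cardinal) := by
        intro i
        obtain ⟨ni, hni⟩ := Cardinal.lt_aleph0.1
          (lt_of_le_of_lt (le_trans (self_le_add_right _ _) (h i)) hmu)
        rw [hni]
        have : ni + k0 ≤ m := by
          have := h i
          rw [hni] at this
          exact_mod_cast this
        exact_mod_cast (by omega : ni ≤ m - k0)
      have hsup2 : (⨆ i, f i) ≤ ((m - k0 : ℕ) : Cardinal) := ciSup_le' hb
      calc (⨆ i, f i) + (k0 : Cardinal) ≤ ((m - k0 : ℕ) : Cardinal) + k0 :=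
            add_le_add hsup2 le_rfl
        _ = ((m - k0 + k0 : ℕ) : Cardinal) := by push_cast; ring
        _ ≤ (m : Cardinal) := by exact_mod_cast (by omega : m - k0 + k0 ≤ m)

end CardAux

section SplitTuple

lemma splitSum {α β : Type} : ∀ {k : ℕ} (w : Fin k → α ⊕ β),
    ∃ (k₁ k₂ : ℕ) (e : Fin k → Fin k₁ ⊕ Fin k₂) (w₁ : Fin k₁ → α) (w₂ : Fin k₂ → β),
      k₁ + k₂ = k ∧
      ∀ i, w i = Sum.elim (fun j => Sum.inl (w₁ j)) (fun j => Sum.inr (w₂ j)) (e i) := by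
  intro k
  induction k with
  | zero =>
      intro w
      exact ⟨0, 0, Fin.elim0, Fin.elim0, Fin.elim0, rfl, fun i => i.elim0⟩
  | succ k ih =>
      intro w
      obtain ⟨k₁, k₂, e, w₁, w₂, hks, hspec⟩ := ih (w ∘ Fin.castSucc)
      rcases hlast : w (Fin.last k) with x | x
      · refine ⟨k₁ + 1, k₂,
          Fin.snoc (fun j => (e j).map Fin.castSucc id) (Sum.inl (Fin.last k₁)),
          Fin.snoc w₁ x, w₂, by omega, fun i => ?_⟩
        refine Fin.lastCases ?_ (fun j => ?_) i
        · rw [Fin.snoc_last, hlast]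
          simp
        · rw [Fin.snoc_castSucc]
          have hs := hspec j
          rcases hej : e j with j' | j'
          · rw [hej] at hs
            simpa [Fin.snoc_castSucc] using hs
          · rw [hej] at hs
            simpa using hs
      · refine ⟨k₁, k₂ + 1,
          Fin.snoc (fun j => (e j).map id Fin.castSucc) (Sum.inr (Fin.last k₂)),
          w₁, Fin.snoc w₂ x, by omega, fun i => ?_⟩
        refine Fin.lastCases ?_ (fun j => ?_) i
        · rw [Fin.snoc_last, hlast]
          simp
        · rw [Fin.snoc_castSucc]
          have hs := hspec j
          rcases hej : e j with j' | j'
          · rw [hej] at hs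
            simpa using hs
          · rw [hej] at hs
            simpa [Fin.snoc_castSucc] using hs

end SplitTuple

section Mix
variable {τ : Vocab}


/-- Mixed assignment into an annotated disjoint union. -/
def mix {A₁ A₂ : Struc τ} {n r₁ r₂ : ℕ} (ρ : Fin n → Fin r₁ ⊕ Fin r₂)
    (a₁ : Fin r₁ → A₁.carrier) (a₂ : Fin r₂ → A₂.carrier) : Fin n → (adu A₁ A₂).carrier :=
  fun i => Sum.elim (fun j => Sum.inl (a₁ j)) (fun j => Sum.inr (a₂ j)) (ρ i)

/-- Extension of a variable-side assignment by a block. -/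
def rhoPlus {n k r₁ r₂ k₁ k₂ : ℕ} (ρ : Fin n → Fin r₁ ⊕ Fin r₂)
    (e : Fin k → Fin k₁ ⊕ Fin k₂) : Fin (n + k) → Fin (r₁ + k₁) ⊕ Fin (r₂ + k₂) :=
  Fin.addCases (fun i => (ρ i).map (Fin.castAdd k₁) (Fin.castAdd k₂))
    (fun j => (e j).map (Fin.natAdd r₁) (Fin.natAdd r₂))

lemma mix_append {A₁ A₂ : Struc τ} {n k r₁ r₂ k₁ k₂ : ℕ} (ρ : Fin n → Fin r₁ ⊕ Fin r₂)
    (e : Fin k → Fin k₁ ⊕ Fin k₂) (a₁ : Fin r₁ → A₁.carrier) (a₂ : Fin r₂ → A₂.carrier)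
    (u₁ : Fin k₁ → A₁.carrier) (u₂ : Fin k₂ → A₂.carrier) :
    Fin.append (mix ρ a₁ a₂)
      (fun i => Sum.elim (fun j => Sum.inl (u₁ j)) (fun j => Sum.inr (u₂ j)) (e i))
      = mix (rhoPlus ρ e) (Fin.append a₁ u₁) (Fin.append a₂ u₂) := by
  funext i
  refine Fin.addCases (fun i₀ => ?_) (fun j₀ => ?_) i
  · rw [Fin.append_left]
    unfold mix rhoPlus
    rw [Fin.addCases_left]
    rcases ρ i₀ with j | j
    · exact congrArg Sum.inl (Fin.append_left a₁ u₁ j).symm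
    · exact congrArg Sum.inr (Fin.append_left a₂ u₂ j).symm
  · rw [Fin.append_right]
    unfold mix rhoPlus
    rw [Fin.addCases_right]
    rcases e j₀ with j | j
    · exact congrArg Sum.inl (Fin.append_right a₁ u₁ j).symm
    · exact congrArg Sum.inr (Fin.append_right a₂ u₂ j).symm

end Mix


section NF
variable {σ : Vocab}

lemma append_cast_eq {α : Type} {n k : ℕ} (v : Fin n → α) (a : α) (w : Fin k → α) :
    (Fin.append v (Fin.cons a w)) ∘ (Fin.cast (by omega : (n+1)+k = n+(k+1)))
      = Fin.append (Fin.snoc v a) w := by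
  funext i
  refine Fin.addCases (fun i₀ => ?_) (fun j₀ => ?_) i
  · rw [Function.comp_apply, Fin.append_left]
    refine Fin.lastCases ?_ (fun j => ?_) i₀
    · have hc : Fin.cast (by omega : (n+1)+k = n+(k+1)) (Fin.castAdd k (Fin.last n))
          = Fin.natAdd n (0 : Fin (k+1)) := by
        apply Fin.ext
        simp
      rw [hc, Fin.append_right, Fin.cons_zero, Fin.snoc_last]
    · have hc : Fin.cast (by omega : (n+1)+k = n+(k+1)) (Fin.castAdd k (Fin.castSucc j))
          = Fin.castAdd (k+1) j := by
        apply Fin.ext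
        simp
      rw [hc, Fin.append_left, Fin.snoc_castSucc]
  · rw [Function.comp_apply, Fin.append_right]
    have hc : Fin.cast (by omega : (n+1)+k = n+(k+1)) (Fin.natAdd (n+1) j₀)
        = Fin.natAdd n j₀.succ := by
      apply Fin.ext
      simp
      omega
    rw [hc, Fin.append_right, Fin.cons_succ]

lemma sigmaNF {κ : Cardinal} {lam : Ordinal} :
    ∀ {n : ℕ} {ψ : Formula σ n}, TSigma σ κ lam ψ →
    ∃ (k : ℕ) (base : Formula σ (n+k)),
      (∀ (A : Struc σ) (v : Fin n → A.carrier), Sat A ψ v ↔ Sat A (exBlock k base) v) ∧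
      rank (exBlock k base) ≤ rank ψ ∧
      ((IsQF base ∧ lam = 0) ∨
        (∃ (I : Type) (f : I → Formula σ (n+k)), base = Formula.iAnd I f ∧ Cardinal.mk I < κ ∧
          ∃ lam' : I → Ordinal, (∀ i, lam' i < lam) ∧ ∀ i, TPi σ κ (lam' i) (f i))) := by
  intro n ψ
  induction ψ with
  | tru => intro h; cases h with | qf h => exact ⟨0, _, fun A v => Iff.rfl, le_rfl, Or.inl ⟨h, rfl⟩⟩
  | fls => intro h; cases h with | qf h => exact ⟨0, _, fun A v => Iff.rfl, le_rfl, Or.inl ⟨h, rfl⟩⟩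
  | rel R ts => intro h; cases h with | qf h => exact ⟨0, _, fun A v => Iff.rfl, le_rfl, Or.inl ⟨h, rfl⟩⟩
  | nrel R ts => intro h; cases h with | qf h => exact ⟨0, _, fun A v => Iff.rfl, le_rfl, Or.inl ⟨h, rfl⟩⟩
  | eq i j => intro h; cases h with | qf h => exact ⟨0, _, fun A v => Iff.rfl, le_rfl, Or.inl ⟨h, rfl⟩⟩
  | neq i j => intro h; cases h with | qf h => exact ⟨0, _, fun A v => Iff.rfl, le_rfl, Or.inl ⟨h, rfl⟩⟩
  | iAnd I f ih =>
      intro h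
      cases h with
      | qf h => exact ⟨0, _, fun A v => Iff.rfl, le_rfl, Or.inl ⟨h, rfl⟩⟩
      | conj I f hI lam' hlt h =>
          exact ⟨0, _, fun A v => Iff.rfl, le_rfl, Or.inr ⟨I, f, rfl, hI, lam', hlt, h⟩⟩
  | iOr I f ih =>
      intro h
      cases h with
      | qf h => exact ⟨0, _, fun A v => Iff.rfl, le_rfl, Or.inl ⟨h, rfl⟩⟩
  | ex ψ₀ ih =>
      intro h
      cases h with
      | qf h => cases h
      | ex h₀ =>
          obtain ⟨k, base, hSat, hRank, hbase⟩ := ih h₀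
          refine ⟨k+1, relabel (Fin.cast (by omega)) base, fun A v => ?_, ?_, ?_⟩
          · rw [sat_ex, sat_exBlock]
            constructor
            · rintro ⟨a, ha⟩
              rw [hSat, sat_exBlock] at ha
              obtain ⟨w, hw⟩ := ha
              refine ⟨Fin.cons a w, ?_⟩
              rw [sat_relabel, append_cast_eq]
              exact hw
            · rintro ⟨w', hw'⟩
              rw [sat_relabel] at hw'
              refine ⟨w' 0, ?_⟩
              rw [hSat, sat_exBlock]
              refine ⟨Fin.tail w', ?_⟩
              rw [← append_cast_eq v (w' 0) (Fin.tail w'), Fin.cons_self_tail]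
              exact hw'
          · rw [rank_exBlock, rank_relabel, rank_ex]
            rw [rank_exBlock] at hRank
            have : ((k+1 : ℕ) : Cardinal) = (k : Cardinal) + 1 := by push_cast; ring
            rw [this, ← add_assoc]
            exact add_le_add_left hRank 1
          · rcases hbase with ⟨hqf, hlam⟩ | ⟨I, f, rfl, hI, lam', hlt, hTPi⟩
            · exact Or.inl ⟨hqf.relabel _, hlam⟩
            · exact Or.inr ⟨I, fun i => relabel (Fin.cast (by omega)) (f i), rfl, hI, lam', hlt,
                fun i => (classRelabel (f i) _).2 (hTPi i)⟩
  | all ψ₀ ih =>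
      intro h
      cases h with
      | qf h => cases h

end NF


section Transfer
universe w
variable {τ : Vocab}

lemma sat_iAnd_punit {A : Struc τ} {n} {χ : Formula τ n} {v : Fin n → A.carrier} :
    Sat A (Formula.iAnd PUnit (fun _ => χ)) v ↔ Sat A χ v := by simp

lemma rank_iAnd_punit {n} {χ : Formula τ n} :
    rank (Formula.iAnd PUnit (fun _ => χ)) = rank χ := by
  rw [rank_iAnd]
  exact ciSup_const

lemma wrapQF_class {κ : Cardinal} {lam : Ordinal} (hκ : 1 < κ) {n} {base : Formula τ n}
    (hb : IsQF base) : TSigma τ κ lam (Formula.iAnd PUnit (fun _ => base)) := by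
  rcases eq_or_ne lam 0 with rfl | hlam
  · exact TSigma.qf (IsQF.iAnd PUnit inferInstance _ (fun _ => hb))
  · refine TSigma.conj PUnit _ ?_ (fun _ => 0) (fun _ => pos_iff_ne_zero.2 hlam)
      (fun _ => TPi.qf hb)
    simpa using hκ

lemma liftLevel {lam' lam : Ordinal} (hle : lam' ≤ lam) {r} {χ : Formula τ r}
    (h : TSigmaInf τ lam' χ) :
    ∃ χ' : Formula τ r, TSigmaInf τ lam χ' ∧ rank χ' ≤ rank χ ∧
      ∀ (A : Struc τ) (v : Fin r → A.carrier), Sat A χ' v ↔ Sat A χ v := by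
  obtain ⟨κ, hκ, hT⟩ := h
  obtain ⟨k, base, hSat, hRank, hbase⟩ := sigmaNF hT
  rcases hbase with ⟨hqf, _⟩ | ⟨I, f, rfl, hI, lam'', hlt, hTPi⟩
  · refine ⟨exBlock k (Formula.iAnd PUnit (fun _ => base)),
      ⟨κ, hκ, TSigma.exBlock' k (wrapQF_class (lt_of_lt_of_le one_lt_aleph0 hκ) hqf)⟩, ?_, ?_⟩
    · rw [rank_exBlock, rank_iAnd_punit, ← rank_exBlock k base]
      exact hRank
    · intro A v
      rw [sat_exBlock, hSat, sat_exBlock]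
      exact exists_congr fun w => sat_iAnd_punit
  · refine ⟨exBlock k (Formula.iAnd I f),
      ⟨κ, hκ, TSigma.exBlock' k (TSigma.conj I f hI lam''
        (fun i => lt_of_lt_of_le (hlt i) hle) hTPi)⟩, hRank, fun A v => (hSat A v).symm⟩

/-- Transfer of tΣ-formulae of level `≤ lam` and rank-budget `c`. -/
def TrS (mu : Cardinal.{w}) (lam : Ordinal) (c : ℕ) (A B : Struc τ) {r : ℕ}
    (a : Fin r → A.carrier) (b : Fin r → B.carrier) : Prop :=
  ∀ lam' ≤ lam, ∀ χ : Formula τ r, TSigmaInf τ lam' χ → rank χ + c ≤ mu →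
    Sat A χ a → Sat B χ b

lemma extLemma [Fintype τ.Rel] {mu : Cardinal.{w}} {lam : Ordinal} {c : ℕ} {A B : Struc τ} {r : ℕ}
    {a : Fin r → A.carrier} {b : Fin r → B.carrier} (h : TrS mu lam c A B a b)
    (k : ℕ) (hkc : ((k : Cardinal.{w}) + c) ≤ mu) (w : Fin k → A.carrier) :
    ∃ w' : Fin k → B.carrier,
      diag A (Fin.append a w) = diag B (Fin.append b w') ∧
      ∀ lam'' < lam, ∀ χ : Formula τ (r+k), TPiInf τ lam'' χ →
        rank χ + ((c+k : ℕ) : Cardinal.{w}) ≤ mu → Sat A χ (Fin.append a w) →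
          Sat B χ (Fin.append b w') := by
  classical
  have hck : ((c+k : ℕ) : Cardinal.{w}) = (k : Cardinal.{w}) + c := by push_cast; ring
  by_cases hlam : lam = 0
  · subst hlam
    have hθ : Sat A (exBlock k (decodeVal (diag A (Fin.append a w)))) a := by
      rw [sat_exBlock]; exact ⟨w, (sat_decodeVal _).2 rfl⟩
    have hclass : TSigmaInf τ 0 (exBlock k (decodeVal (diag A (Fin.append a w)))) :=
      ⟨ℵ₀, le_rfl, TSigma.exBlock' k (TSigma.qf (isQF_decodeVal _))⟩
    have hrk : rank (exBlock k (decodeVal (diag A (Fin.append a w)))) + c ≤ mu := by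
      rw [rank_exBlock, rank_decodeVal, zero_add]
      exact hkc
    have := h 0 le_rfl _ hclass hrk hθ
    rw [sat_exBlock] at this
    obtain ⟨w', hw'⟩ := this
    exact ⟨w', ((sat_decodeVal _).1 hw').symm,
      fun l hl => absurd hl (not_lt_zero)⟩
  · have hlam0 : 0 < lam := pos_iff_ne_zero.2 hlam
    by_contra hno
    push_neg at hno
    have hbad : ∀ w' : Fin k → B.carrier, ∃ (l : Ordinal) (ξ : Formula τ (r+k)) (κ : Cardinal),
        l < lam ∧ ℵ₀ ≤ κ ∧ TPi τ κ l ξ ∧ rank ξ + ((c+k : ℕ) : Cardinal.{w}) ≤ mu ∧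
        Sat A ξ (Fin.append a w) ∧ ¬ Sat B ξ (Fin.append b w') := by
      intro w'
      by_cases hd : diag A (Fin.append a w) = diag B (Fin.append b w')
      · obtain ⟨l, hl, χ, hχ, hrk, hSA, hSB⟩ := hno w' hd
        obtain ⟨κ, hκ, hT⟩ := hχ
        exact ⟨l, χ, κ, hl, hκ, hT, hrk, hSA, hSB⟩
      · refine ⟨0, decodeVal (diag A (Fin.append a w)), ℵ₀, hlam0, le_rfl,
          TPi.qf (isQF_decodeVal _), ?_, (sat_decodeVal _).2 rfl, ?_⟩
        · rw [rank_decodeVal, zero_add, hck]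
          exact hkc
        · intro hsat
          exact hd ((sat_decodeVal _).1 hsat).symm
    choose L Xi K hl hK hT hrk hSA hSB using hbad
    set κ : Cardinal :=
      (ℵ₀ ⊔ Order.succ (Cardinal.mk (Fin k → B.carrier))) ⊔ (⨆ w', K w') with hκdef
    have hκinf : ℵ₀ ≤ κ := le_trans le_sup_left le_sup_left
    have hKle : ∀ w', K w' ≤ κ :=
      fun w' => le_trans (le_ciSup (Cardinal.bddAbove_range _) w') le_sup_right
    have hθclass : TSigma τ κ lam (exBlock k (Formula.iAnd (Fin k → B.carrier) Xi)) := by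
      refine TSigma.exBlock' k (TSigma.conj _ Xi ?_ L hl
        (fun w' => (classMono _ (hKle w')).2 (hT w')))
      exact lt_of_lt_of_le (Order.lt_succ _) (le_trans le_sup_right le_sup_left)
    have hθrank : rank (exBlock k (Formula.iAnd (Fin k → B.carrier) Xi)) + c ≤ mu := by
      rw [rank_exBlock, rank_iAnd, add_assoc]
      have := iSup_add_le_card (fun w' => rank (Xi w')) ((k:Cardinal)+c) mu hkc
        (fun w' => by rw [← hck]; exact hrk w')
      simpa using this
    have hθsat : Sat A (exBlock k (Formula.iAnd (Fin k → B.carrier) Xi)) a := by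
      rw [sat_exBlock]
      exact ⟨w, fun w' => hSA w'⟩
    have := h lam le_rfl _ ⟨κ, hκinf, hθclass⟩ hθrank hθsat
    rw [sat_exBlock] at this
    obtain ⟨w'', hw''⟩ := this
    exact hSB w'' (hw'' w'')

end Transfer


section ADUQF
variable {τ : Vocab}


lemma adu_rel_some_mix {A₁ A₂ : Struc τ} {n r₁ r₂ : ℕ} (S : τ.Rel)
    (ts : Fin (τ.arity S) → Fin n) (ρ : Fin n → Fin r₁ ⊕ Fin r₂)
    (a₁ : Fin r₁ → A₁.carrier) (a₂ : Fin r₂ → A₂.carrier) :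
    ((adu A₁ A₂).rel (Option.some S) (fun i => mix ρ a₁ a₂ (ts i))) ↔
      ((∃ j : Fin (τ.arity S) → Fin r₁, (∀ i, ρ (ts i) = Sum.inl (j i)) ∧
          A₁.rel S (fun i => a₁ (j i))) ∨
       (∃ j : Fin (τ.arity S) → Fin r₂, (∀ i, ρ (ts i) = Sum.inr (j i)) ∧
          A₂.rel S (fun i => a₂ (j i)))) := by
  show ((∃ w, A₁.rel S w ∧ (fun i => mix ρ a₁ a₂ (ts i)) = fun i => Sum.inl (w i)) ∨
        (∃ w, A₂.rel S w ∧ (fun i => mix ρ a₁ a₂ (ts i)) = fun i => Sum.inr (w i))) ↔ _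
  constructor
  · rintro (⟨w, hrel, hu⟩ | ⟨w, hrel, hu⟩)
    · have hj : ∀ i, ∃ j, ρ (ts i) = Sum.inl j ∧ a₁ j = w i := by
        intro i
        have hi := congrFun hu i
        rcases hρ : ρ (ts i) with j | j
        · refine ⟨j, rfl, ?_⟩
          unfold mix at hi
          rw [hρ] at hi
          change Sum.inl (a₁ j) = Sum.inl (w i) at hi
          exact Sum.inl.inj hi
        · unfold mix at hi
          rw [hρ] at hi
          exact (Sum.inr_ne_inl hi).elim
      choose j hj1 hj2 using hj
      refine Or.inl ⟨j, hj1, ?_⟩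
      have : (fun i => a₁ (j i)) = w := funext hj2
      rw [this]
      exact hrel
    · have hj : ∀ i, ∃ j, ρ (ts i) = Sum.inr j ∧ a₂ j = w i := by
        intro i
        have hi := congrFun hu i
        rcases hρ : ρ (ts i) with j | j
        · unfold mix at hi
          rw [hρ] at hi
          exact (Sum.inl_ne_inr hi).elim
        · refine ⟨j, rfl, ?_⟩
          unfold mix at hi
          rw [hρ] at hi
          change Sum.inr (a₂ j) = Sum.inr (w i) at hi
          exact Sum.inr.inj hi
      choose j hj1 hj2 using hj
      refine Or.inr ⟨j, hj1, ?_⟩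
      have : (fun i => a₂ (j i)) = w := funext hj2
      rw [this]
      exact hrel
  · rintro (⟨j, hρ, hrel⟩ | ⟨j, hρ, hrel⟩)
    · exact Or.inl ⟨fun i => a₁ (j i), hrel, funext fun i => by unfold mix; rw [hρ i]; rfl⟩
    · exact Or.inr ⟨fun i => a₂ (j i), hrel, funext fun i => by unfold mix; rw [hρ i]; rfl⟩

lemma qfADU {A₁ A₂ B₁ B₂ : Struc τ} {r₁ r₂ : ℕ}
    {a₁ : Fin r₁ → A₁.carrier} {a₂ : Fin r₂ → A₂.carrier}
    {b₁ : Fin r₁ → B₁.carrier} {b₂ : Fin r₂ → B₂.carrier}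
    (h1 : ∀ χ : Formula τ r₁, IsQF χ → (Sat A₁ χ a₁ ↔ Sat B₁ χ b₁))
    (h2 : ∀ χ : Formula τ r₂, IsQF χ → (Sat A₂ χ a₂ ↔ Sat B₂ χ b₂)) :
    ∀ {n} {ψ : Formula (annotV τ) n}, IsQF ψ → ∀ (ρ : Fin n → Fin r₁ ⊕ Fin r₂),
      (Sat (adu A₁ A₂) ψ (mix ρ a₁ a₂) ↔ Sat (adu B₁ B₂) ψ (mix ρ b₁ b₂)) := by
  intro n ψ h
  induction h with
  | tru => intro ρ; simp
  | fls => intro ρ; simp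
  | rel R ts =>
      intro ρ
      rw [sat_rel, sat_rel]
      cases R with
      | none =>
          show ((mix ρ a₁ a₂ (ts ⟨0, Nat.one_pos⟩)).isLeft = true) ↔
            ((mix ρ b₁ b₂ (ts ⟨0, Nat.one_pos⟩)).isLeft = true)
          unfold mix
          rcases ρ (ts ⟨0, Nat.one_pos⟩) with j | j <;> exact Iff.rfl
      | some S =>
          rw [adu_rel_some_mix S ts ρ a₁ a₂, adu_rel_some_mix S ts ρ b₁ b₂]
          apply or_congr
          · exact exists_congr fun j => and_congr_right fun _ =>
              h1 (Formula.rel S j) (IsQF.rel _ _)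
          · exact exists_congr fun j => and_congr_right fun _ =>
              h2 (Formula.rel S j) (IsQF.rel _ _)
  | nrel R ts =>
      intro ρ
      rw [sat_nrel, sat_nrel]
      apply not_congr
      cases R with
      | none =>
          show ((mix ρ a₁ a₂ (ts ⟨0, Nat.one_pos⟩)).isLeft = true) ↔
            ((mix ρ b₁ b₂ (ts ⟨0, Nat.one_pos⟩)).isLeft = true)
          unfold mix
          rcases ρ (ts ⟨0, Nat.one_pos⟩) with j | j <;> exact Iff.rfl
      | some S =>
          rw [adu_rel_some_mix S ts ρ a₁ a₂, adu_rel_some_mix S ts ρ b₁ b₂]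
          apply or_congr
          · exact exists_congr fun j => and_congr_right fun _ =>
              h1 (Formula.rel S j) (IsQF.rel _ _)
          · exact exists_congr fun j => and_congr_right fun _ =>
              h2 (Formula.rel S j) (IsQF.rel _ _)
  | eq i j =>
      intro ρ
      rw [sat_eq, sat_eq]
      rcases hi : ρ i with x | x <;> rcases hj : ρ j with y | y <;>
        simp only [mix, hi, hj, Sum.elim_inl, Sum.elim_inr]
      · change (Sum.inl (a₁ x) : A₁.carrier ⊕ A₂.carrier) = Sum.inl (a₁ y) ↔ (Sum.inl (b₁ x) : B₁.carrier ⊕ B₂.carrier) = Sum.inl (b₁ y)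
        rw [Sum.inl_injective.eq_iff, Sum.inl_injective.eq_iff]
        exact h1 (Formula.eq x y) (IsQF.eq _ _)
      · exact iff_of_false Sum.inl_ne_inr Sum.inl_ne_inr
      · exact iff_of_false Sum.inr_ne_inl Sum.inr_ne_inl
      · change (Sum.inr (a₂ x) : A₁.carrier ⊕ A₂.carrier) = Sum.inr (a₂ y) ↔ (Sum.inr (b₂ x) : B₁.carrier ⊕ B₂.carrier) = Sum.inr (b₂ y)
        rw [Sum.inr_injective.eq_iff, Sum.inr_injective.eq_iff]
        exact h2 (Formula.eq x y) (IsQF.eq _ _)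
  | neq i j =>
      intro ρ
      rw [sat_neq, sat_neq]
      apply not_congr
      rcases hi : ρ i with x | x <;> rcases hj : ρ j with y | y <;>
        simp only [mix, hi, hj, Sum.elim_inl, Sum.elim_inr]
      · change (Sum.inl (a₁ x) : A₁.carrier ⊕ A₂.carrier) = Sum.inl (a₁ y) ↔ (Sum.inl (b₁ x) : B₁.carrier ⊕ B₂.carrier) = Sum.inl (b₁ y)
        rw [Sum.inl_injective.eq_iff, Sum.inl_injective.eq_iff]
        exact h1 (Formula.eq x y) (IsQF.eq _ _)
      · exact iff_of_false Sum.inl_ne_inr Sum.inl_ne_inr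
      · exact iff_of_false Sum.inr_ne_inl Sum.inr_ne_inl
      · change (Sum.inr (a₂ x) : A₁.carrier ⊕ A₂.carrier) = Sum.inr (a₂ y) ↔ (Sum.inr (b₂ x) : B₁.carrier ⊕ B₂.carrier) = Sum.inr (b₂ y)
        rw [Sum.inr_injective.eq_iff, Sum.inr_injective.eq_iff]
        exact h2 (Formula.eq x y) (IsQF.eq _ _)
  | iAnd I hI f hf ih =>
      intro ρ
      rw [sat_iAnd, sat_iAnd]
      exact forall_congr' fun i => ih i ρ
  | iOr I hI f hf ih =>
      intro ρ
      rw [sat_iOr, sat_iOr]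
      exact exists_congr fun i => ih i ρ

end ADUQF

section AppQF
variable {σ τ : Vocab}

/-- Push a quantifier-free τ-formula through a quantifier-free interpretation. -/
def qtr (Ξ : QFInterp σ τ) : ∀ {m : ℕ}, Formula τ m → Formula σ m
  | _, .tru => .tru
  | _, .fls => .fls
  | _, .rel R ts => relabel ts (Ξ.xiR R)
  | _, .nrel R ts => nnfNeg (relabel ts (Ξ.xiR R))
  | _, .eq i j => .eq i j
  | _, .neq i j => .neq i j
  | _, .iAnd I f => .iAnd I (fun i => qtr Ξ (f i))
  | _, .iOr I f => .iOr I (fun i => qtr Ξ (f i))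
  | _, .ex _ => .tru
  | _, .all _ => .tru

lemma isQF_qtr (Ξ : QFInterp σ τ) {m} {χ : Formula τ m} (h : IsQF χ) : IsQF (qtr Ξ χ) := by
  induction h with
  | tru => exact IsQF.tru
  | fls => exact IsQF.fls
  | rel R ts => exact (Ξ.hR R).relabel ts
  | nrel R ts => exact ((Ξ.hR R).relabel ts).nnfNeg
  | eq i j => exact IsQF.eq _ _
  | neq i j => exact IsQF.neq _ _
  | iAnd I hI f hf ih => exact IsQF.iAnd I hI _ ih
  | iOr I hI f hf ih => exact IsQF.iOr I hI _ ih

lemma sat_qtr (Ξ : QFInterp σ τ) {M : Struc σ} {m} {χ : Formula τ m} (h : IsQF χ)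
    (w : Fin m → (Ξ.app M).carrier) :
    Sat (Ξ.app M) χ w ↔ Sat M (qtr Ξ χ) (fun i => (w i).1) := by
  induction h with
  | tru => simp [qtr]
  | fls => simp [qtr]
  | rel R ts =>
      show Sat M (Ξ.xiR R) (fun i => ((w (ts i))).1) ↔ Sat M (relabel ts (Ξ.xiR R)) _
      rw [sat_relabel]
      exact Iff.rfl
  | nrel R ts =>
      show ¬ Sat M (Ξ.xiR R) (fun i => ((w (ts i))).1) ↔ Sat M (nnfNeg (relabel ts (Ξ.xiR R))) _
      rw [sat_nnfNeg, sat_relabel]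
      exact Iff.rfl
  | eq i j =>
      show w i = w j ↔ (w i).1 = (w j).1
      exact Subtype.ext_iff
  | neq i j =>
      show w i ≠ w j ↔ (w i).1 ≠ (w j).1
      exact not_congr Subtype.ext_iff
  | iAnd I hI f hf ih =>
      rw [sat_iAnd]
      exact forall_congr' fun i => ih i
  | iOr I hI f hf ih =>
      rw [sat_iOr]
      exact exists_congr fun i => ih i

end AppQF


section MainTransfer
universe w
variable {τ : Vocab}

lemma comp_append {α : Type} {β : Type} (g : α → β) {n k : ℕ} (u : Fin n → α) (w : Fin k → α) :
    (fun i => g (Fin.append u w i)) = Fin.append (fun i => g (u i)) (fun i => g (w i)) := by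
  funext i
  refine Fin.addCases (fun i₀ => ?_) (fun j₀ => ?_) i <;>
    simp [Fin.append_left, Fin.append_right]

lemma TSigmaInf.nnfNeg' {lam : Ordinal} {r} {χ : Formula τ r} (h : TSigmaInf τ lam χ) :
    TPiInf τ lam (nnfNeg χ) := by
  obtain ⟨κ, hκ, hT⟩ := h
  exact ⟨κ, hκ, (classDual χ).1 hT⟩

lemma TPiInf.nnfNeg' {lam : Ordinal} {r} {χ : Formula τ r} (h : TPiInf τ lam χ) :
    TSigmaInf τ lam (nnfNeg χ) := by
  obtain ⟨κ, hκ, hT⟩ := h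
  exact ⟨κ, hκ, (classDual χ).2 hT⟩

lemma mainTransfer [Fintype τ.Rel] (Ξ : QFInterp (annotV τ) τ) (mu : Cardinal.{w}) :
    ∀ (lam : Ordinal), ∀ {n : ℕ} (ψ : Formula τ n) (κ : Cardinal), TSigma τ κ lam ψ →
    ∀ (c : ℕ), rank ψ + c ≤ mu →
    ∀ {r₁ r₂ : ℕ} (ρ : Fin n → Fin r₁ ⊕ Fin r₂) (A₁ A₂ B₁ B₂ : Struc τ)
      (a₁ : Fin r₁ → A₁.carrier) (a₂ : Fin r₂ → A₂.carrier)
      (b₁ : Fin r₁ → B₁.carrier) (b₂ : Fin r₂ → B₂.carrier),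
      TrS mu lam c A₁ B₁ a₁ b₁ → TrS mu lam c A₂ B₂ a₂ b₂ →
      ∀ (hUA : ∀ i, Sat (adu A₁ A₂) Ξ.xiU (fun _ => mix ρ a₁ a₂ i))
        (hUB : ∀ i, Sat (adu B₁ B₂) Ξ.xiU (fun _ => mix ρ b₁ b₂ i)),
      Sat (Ξ.app (adu A₁ A₂)) ψ (fun i => ⟨mix ρ a₁ a₂ i, hUA i⟩) →
      Sat (Ξ.app (adu B₁ B₂)) ψ (fun i => ⟨mix ρ b₁ b₂ i, hUB i⟩) := by
  intro lam
  induction lam using Ordinal.induction with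
  | _ lam IH =>
  intro n ψ κ hψ c hrk r₁ r₂ ρ A₁ A₂ B₁ B₂ a₁ a₂ b₁ b₂ h1 h2 hUA hUB hsat
  obtain ⟨k, base, hSatEq, hRank, hbase⟩ := sigmaNF hψ
  replace hsat := (sat_exBlock _ _ _).1 ((hSatEq _ _).1 hsat)
  obtain ⟨wq, hw⟩ := hsat
  set w : Fin k → (adu A₁ A₂).carrier := fun i => (wq i).1 with hwdef
  obtain ⟨k₁, k₂, e, w₁, w₂, hks, hwspec⟩ := splitSum w
  have hrkbase : rank base + (k : Cardinal.{w}) + (c : Cardinal.{w}) ≤ mu := by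
    rw [← rank_exBlock]
    exact le_trans (add_le_add_left hRank (c : Cardinal.{w})) hrk
  have hkc : (k : Cardinal.{w}) + (c : Cardinal.{w}) ≤ mu := by
    refine le_trans (add_le_add_left ?_ (c : Cardinal.{w})) hrkbase
    exact le_add_self
  have hk1c : (k₁ : Cardinal.{w}) + (c : Cardinal.{w}) ≤ mu := by
    refine le_trans (add_le_add_left ?_ (c : Cardinal.{w})) hkc
    exact_mod_cast (by omega : k₁ ≤ k)
  have hk2c : (k₂ : Cardinal.{w}) + (c : Cardinal.{w}) ≤ mu := by
    refine le_trans (add_le_add_left ?_ (c : Cardinal.{w})) hkc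
    exact_mod_cast (by omega : k₂ ≤ k)
  obtain ⟨w₁', hd1, hp1⟩ := extLemma h1 k₁ hk1c w₁
  obtain ⟨w₂', hd2, hp2⟩ := extLemma h2 k₂ hk2c w₂
  have hq1 : ∀ χ : Formula τ (r₁+k₁), IsQF χ →
      (Sat A₁ χ (Fin.append a₁ w₁) ↔ Sat B₁ χ (Fin.append b₁ w₁')) :=
    fun χ hχ => diag_eq_qf hd1 hχ
  have hq2 : ∀ χ : Formula τ (r₂+k₂), IsQF χ →
      (Sat A₂ χ (Fin.append a₂ w₂) ↔ Sat B₂ χ (Fin.append b₂ w₂')) :=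
    fun χ hχ => diag_eq_qf hd2 hχ
  set wB : Fin k → (adu B₁ B₂).carrier :=
    fun i => Sum.elim (fun j => Sum.inl (w₁' j)) (fun j => Sum.inr (w₂' j)) (e i) with hwBdef
  have hAmix : Fin.append (mix ρ a₁ a₂) w
      = mix (rhoPlus ρ e) (Fin.append a₁ w₁) (Fin.append a₂ w₂) := by
    rw [show w = (fun i => Sum.elim (fun j => Sum.inl (w₁ j)) (fun j => Sum.inr (w₂ j)) (e i))
      from funext hwspec]
    exact mix_append ρ e a₁ a₂ w₁ w₂
  have hBmix : Fin.append (mix ρ b₁ b₂) wB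
      = mix (rhoPlus ρ e) (Fin.append b₁ w₁') (Fin.append b₂ w₂') :=
    mix_append ρ e b₁ b₂ w₁' w₂'
  have hUA' : ∀ i : Fin (n+k), Sat (adu A₁ A₂) Ξ.xiU
      (fun _ => mix (rhoPlus ρ e) (Fin.append a₁ w₁) (Fin.append a₂ w₂) i) := by
    intro i
    have hi := congrFun hAmix i
    rw [← hi]
    refine Fin.addCases (fun i₀ => ?_) (fun j₀ => ?_) i
    · simp only [Fin.append_left]
      exact hUA i₀
    · simp only [Fin.append_right]
      exact (wq j₀).2
  have hUB' : ∀ i : Fin (n+k), Sat (adu B₁ B₂) Ξ.xiU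
      (fun _ => mix (rhoPlus ρ e) (Fin.append b₁ w₁') (Fin.append b₂ w₂') i) := by
    intro i
    exact (qfADU hq1 hq2 Ξ.hU (fun _ : Fin 1 => rhoPlus ρ e i)).1 (hUA' i)
  have hUwB : ∀ j : Fin k, Sat (adu B₁ B₂) Ξ.xiU (fun _ => wB j) := by
    intro j
    have hh : wB j = mix (rhoPlus ρ e) (Fin.append b₁ w₁') (Fin.append b₂ w₂')
        (Fin.natAdd n j) := by
      rw [← congrFun hBmix (Fin.natAdd n j), Fin.append_right]
    simp only [hh]
    exact hUB' _
  have hasgA : Fin.append (fun i => (⟨mix ρ a₁ a₂ i, hUA i⟩ : (Ξ.app (adu A₁ A₂)).carrier)) wq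
      = fun i => ⟨mix (rhoPlus ρ e) (Fin.append a₁ w₁) (Fin.append a₂ w₂) i, hUA' i⟩ := by
    funext i
    apply Subtype.ext
    have h0 := congrFun
      (comp_append (Subtype.val) (fun i => (⟨mix ρ a₁ a₂ i, hUA i⟩ :
        (Ξ.app (adu A₁ A₂)).carrier)) wq) i
    exact h0.trans (congrFun hAmix i)
  have hasgB : Fin.append (fun i => (⟨mix ρ b₁ b₂ i, hUB i⟩ : (Ξ.app (adu B₁ B₂)).carrier))
      (fun j => (⟨wB j, hUwB j⟩ : (Ξ.app (adu B₁ B₂)).carrier))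
      = fun i => ⟨mix (rhoPlus ρ e) (Fin.append b₁ w₁') (Fin.append b₂ w₂') i, hUB' i⟩ := by
    funext i
    apply Subtype.ext
    have h0 := congrFun
      (comp_append (Subtype.val) (fun i => (⟨mix ρ b₁ b₂ i, hUB i⟩ :
        (Ξ.app (adu B₁ B₂)).carrier)) (fun j => ⟨wB j, hUwB j⟩)) i
    exact h0.trans (congrFun hBmix i)
  replace hw := (congrArg (Sat (Ξ.app (adu A₁ A₂)) base) hasgA).mp hw
  refine (hSatEq _ _).2 ((sat_exBlock _ _ _).2 ?_)
  refine ⟨(fun j => ⟨wB j, hUwB j⟩), ?_⟩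
  refine (congrArg (Sat (Ξ.app (adu B₁ B₂)) base) hasgB).mpr ?_
  rcases hbase with ⟨hqf, rfl⟩ | ⟨I, f, rfl, hI, lam', hlt, hTPi⟩
  · -- quantifier-free base
    have hwA' : Sat (adu A₁ A₂) (qtr Ξ base)
        (mix (rhoPlus ρ e) (Fin.append a₁ w₁) (Fin.append a₂ w₂)) :=
      (sat_qtr Ξ hqf _).1 hw
    have hwB' := (qfADU hq1 hq2 (isQF_qtr Ξ hqf) (rhoPlus ρ e)).1 hwA'
    exact (sat_qtr Ξ hqf _).2 hwB'
  · -- conjunction of tΠ's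
    refine sat_iAnd.2 ?_
    intro i
    have hck : ((c+k₁ : ℕ) : Cardinal.{w}) ≤ ((c+k : ℕ) : Cardinal.{w}) := by
      exact_mod_cast (by omega : c+k₁ ≤ c+k)
    have hck2 : ((c+k₂ : ℕ) : Cardinal.{w}) ≤ ((c+k : ℕ) : Cardinal.{w}) := by
      exact_mod_cast (by omega : c+k₂ ≤ c+k)
    have hs1 : TrS mu (lam' i) (c + k) B₁ A₁ (Fin.append b₁ w₁') (Fin.append a₁ w₁) := by
      intro l hl χ hχ hr hsatB
      by_contra hnA
      have hAneg : Sat A₁ (nnfNeg χ) (Fin.append a₁ w₁) := (sat_nnfNeg χ _).2 hnA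
      have hBneg := hp1 l (lt_of_le_of_lt hl (hlt i)) (nnfNeg χ) hχ.nnfNeg'
        (by rw [rank_nnfNeg]; exact le_trans (add_le_add_right hck _) hr) hAneg
      exact (sat_nnfNeg χ _).1 hBneg hsatB
    have hs2 : TrS mu (lam' i) (c + k) B₂ A₂ (Fin.append b₂ w₂') (Fin.append a₂ w₂) := by
      intro l hl χ hχ hr hsatB
      by_contra hnA
      have hAneg : Sat A₂ (nnfNeg χ) (Fin.append a₂ w₂) := (sat_nnfNeg χ _).2 hnA
      have hBneg := hp2 l (lt_of_le_of_lt hl (hlt i)) (nnfNeg χ) hχ.nnfNeg'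
        (by rw [rank_nnfNeg]; exact le_trans (add_le_add_right hck2 _) hr) hAneg
      exact (sat_nnfNeg χ _).1 hBneg hsatB
    by_contra hnB
    have hBneg : Sat (Ξ.app (adu B₁ B₂)) (nnfNeg (f i))
        (fun i => ⟨mix (rhoPlus ρ e) (Fin.append b₁ w₁') (Fin.append b₂ w₂') i, hUB' i⟩) :=
      (sat_nnfNeg _ _).2 hnB
    have hfirank : rank (nnfNeg (f i)) + ((c + k : ℕ) : Cardinal) ≤ mu := by
      rw [rank_nnfNeg]
      have hfle : rank.{w} (f i) ≤ rank.{w} (Formula.iAnd I f) := by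
        rw [rank_iAnd]
        exact le_ciSup (Cardinal.bddAbove_range _) i
      calc rank (f i) + ((c+k : ℕ) : Cardinal.{w})
          ≤ rank (Formula.iAnd I f) + ((c+k : ℕ) : Cardinal.{w}) := add_le_add_left hfle _
        _ = rank (Formula.iAnd I f) + ((k : Cardinal.{w}) + (c : Cardinal.{w})) := by push_cast; ring
        _ = rank (Formula.iAnd I f) + (k : Cardinal.{w}) + (c : Cardinal.{w}) := by rw [add_assoc]
        _ ≤ mu := hrkbase
    have hAneg := IH (lam' i) (hlt i) (nnfNeg (f i)) κ ((classDual (f i)).2 (hTPi i)) (c+k)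
      hfirank (rhoPlus ρ e) B₁ B₂ A₁ A₂ (Fin.append b₁ w₁') (Fin.append b₂ w₂')
      (Fin.append a₁ w₁) (Fin.append a₂ w₂) hs1 hs2 hUB' hUA' hBneg
    exact (sat_nnfNeg _ _).1 hAneg ((sat_iAnd.1 hw) i)

end MainTransfer


section Canon
universe v
variable {τ : Vocab}

lemma lift_bound_of {lam : Ordinal.{v}} {I : Type} (ls : I → Ordinal.{0})
    (lam' : I → Ordinal.{v}) (hle : ∀ i, Ordinal.lift.{v,0} (ls i) ≤ lam' i)
    (hlt : ∀ i, lam' i < lam) :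
    Ordinal.lift.{v,0} (⨆ i, (ls i + 1)) ≤ lam := by
  by_contra hgt
  push_neg at hgt
  obtain ⟨lam₀, hlt2, hlam₀⟩ := Ordinal.lt_lift_iff.1 hgt
  rcases isEmpty_or_nonempty I with hE | hNE
  · rw [ciSup_of_empty] at hlt2
    exact not_lt_zero hlt2
  · obtain ⟨i, hi⟩ := (lt_ciSup_iff (Ordinal.bddAbove_range _)).1 hlt2
    rw [Ordinal.add_one_eq_succ, Order.lt_succ_iff] at hi
    have : lam ≤ lam' i := by
      rw [← hlam₀]
      exact le_trans (Ordinal.lift_le.2 hi) (hle i)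
    exact absurd (hlt i) (not_lt.2 this)

lemma canonLevel : ∀ {n} (ψ : Formula τ n) {κ : Cardinal.{0}} {lam : Ordinal.{v}},
    (TSigma τ κ lam ψ → ∃ l : Ordinal.{0}, TSigma τ κ (Ordinal.lift.{v,0} l) ψ ∧
      Ordinal.lift.{v,0} l ≤ lam) ∧
    (TPi τ κ lam ψ → ∃ l : Ordinal.{0}, TPi τ κ (Ordinal.lift.{v,0} l) ψ ∧
      Ordinal.lift.{v,0} l ≤ lam) := by
  intro n ψ
  induction ψ with
  | tru => intro κ lam; exact ⟨fun h => by cases h with | qf h =>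
        exact ⟨0, by rw [Ordinal.lift_zero]; exact ⟨TSigma.qf h, le_rfl⟩⟩,
      fun h => by cases h with | qf h =>
        exact ⟨0, by rw [Ordinal.lift_zero]; exact ⟨TPi.qf h, le_rfl⟩⟩⟩
  | fls => intro κ lam; exact ⟨fun h => by cases h with | qf h =>
        exact ⟨0, by rw [Ordinal.lift_zero]; exact ⟨TSigma.qf h, le_rfl⟩⟩,
      fun h => by cases h with | qf h =>
        exact ⟨0, by rw [Ordinal.lift_zero]; exact ⟨TPi.qf h, le_rfl⟩⟩⟩
  | rel R ts => intro κ lam; exact ⟨fun h => by cases h with | qf h =>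
        exact ⟨0, by rw [Ordinal.lift_zero]; exact ⟨TSigma.qf h, le_rfl⟩⟩,
      fun h => by cases h with | qf h =>
        exact ⟨0, by rw [Ordinal.lift_zero]; exact ⟨TPi.qf h, le_rfl⟩⟩⟩
  | nrel R ts => intro κ lam; exact ⟨fun h => by cases h with | qf h =>
        exact ⟨0, by rw [Ordinal.lift_zero]; exact ⟨TSigma.qf h, le_rfl⟩⟩,
      fun h => by cases h with | qf h =>
        exact ⟨0, by rw [Ordinal.lift_zero]; exact ⟨TPi.qf h, le_rfl⟩⟩⟩
  | eq i j => intro κ lam; exact ⟨fun h => by cases h with | qf h =>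
        exact ⟨0, by rw [Ordinal.lift_zero]; exact ⟨TSigma.qf h, le_rfl⟩⟩,
      fun h => by cases h with | qf h =>
        exact ⟨0, by rw [Ordinal.lift_zero]; exact ⟨TPi.qf h, le_rfl⟩⟩⟩
  | neq i j => intro κ lam; exact ⟨fun h => by cases h with | qf h =>
        exact ⟨0, by rw [Ordinal.lift_zero]; exact ⟨TSigma.qf h, le_rfl⟩⟩,
      fun h => by cases h with | qf h =>
        exact ⟨0, by rw [Ordinal.lift_zero]; exact ⟨TPi.qf h, le_rfl⟩⟩⟩
  | iAnd I f ih =>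
      intro κ lam
      constructor
      · intro h
        cases h with
        | qf h => exact ⟨0, by rw [Ordinal.lift_zero]; exact ⟨TSigma.qf h, le_rfl⟩⟩
        | conj I f hI lam' hlt h =>
            choose ls hTP hle using fun i => ((ih i).2 (h i))
            refine ⟨⨆ i, (ls i + 1), ?_, lift_bound_of ls lam' hle hlt⟩
            refine TSigma.conj I f hI (fun i => Ordinal.lift.{v,0} (ls i)) (fun i => ?_) hTP
            rw [Ordinal.lift_lt]
            refine lt_of_lt_of_le ?_ (le_ciSup (Ordinal.bddAbove_range _) i)
            rw [Ordinal.add_one_eq_succ]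
            exact Order.lt_succ _
      · intro h
        cases h with
        | qf h => exact ⟨0, by rw [Ordinal.lift_zero]; exact ⟨TPi.qf h, le_rfl⟩⟩
  | iOr I f ih =>
      intro κ lam
      constructor
      · intro h
        cases h with
        | qf h => exact ⟨0, by rw [Ordinal.lift_zero]; exact ⟨TSigma.qf h, le_rfl⟩⟩
      · intro h
        cases h with
        | qf h => exact ⟨0, by rw [Ordinal.lift_zero]; exact ⟨TPi.qf h, le_rfl⟩⟩
        | disj I f hI lam' hlt h =>
            choose ls hTS hle using fun i => ((ih i).1 (h i))
            refine ⟨⨆ i, (ls i + 1), ?_, lift_bound_of ls lam' hle hlt⟩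
            refine TPi.disj I f hI (fun i => Ordinal.lift.{v,0} (ls i)) (fun i => ?_) hTS
            rw [Ordinal.lift_lt]
            refine lt_of_lt_of_le ?_ (le_ciSup (Ordinal.bddAbove_range _) i)
            rw [Ordinal.add_one_eq_succ]
            exact Order.lt_succ _
  | ex ψ₀ ih =>
      intro κ lam
      constructor
      · intro h
        cases h with
        | qf h => cases h
        | ex h₀ =>
            obtain ⟨l, hT, hle⟩ := (ih).1 h₀
            exact ⟨l, TSigma.ex hT, hle⟩
      · intro h
        cases h with
        | qf h => cases h
  | all ψ₀ ih =>
      intro κ lam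
      constructor
      · intro h
        cases h with
        | qf h => cases h
      · intro h
        cases h with
        | qf h => cases h
        | all h₀ =>
            obtain ⟨l, hT, hle⟩ := (ih).2 h₀
            exact ⟨l, TPi.all hT, hle⟩

end Canon


section Family
universe v w
variable (τ : Vocab) (mu : Cardinal.{w})

/-- Canonical DNF over a set of atomic valuations. -/
noncomputable def dnfF {r : ℕ} (S : Set ((Atom τ r) → Bool)) : Formula τ r :=
  Formula.iOr {d // d ∈ S} (fun d => decodeVal d.1)

variable {τ}

lemma isQF_dnfF [Fintype τ.Rel] {r} (S : Set ((Atom τ r) → Bool)) : IsQF (dnfF τ S) := by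
  refine IsQF.iOr _ ?_ _ (fun d => isQF_decodeVal _)
  infer_instance

lemma sat_dnfF {A : Struc τ} {r} {S : Set ((Atom τ r) → Bool)} {v : Fin r → A.carrier} :
    Sat A (dnfF τ S) v ↔ diag A v ∈ S := by
  unfold dnfF
  rw [sat_iOr]
  constructor
  · rintro ⟨⟨d, hd⟩, hsat⟩
    rw [(sat_decodeVal _).1 hsat]
    exact hd
  · intro h
    exact ⟨⟨diag A v, h⟩, (sat_decodeVal _).2 rfl⟩

variable (τ)

/-- Valid formulas: in tΣ_{∞,lam}, rank-budget `c` within `mu`. -/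
def VF (lam : Ordinal.{v}) (r c : ℕ) : Type 1 :=
  {χ : Formula τ r // TSigmaInf τ lam χ ∧ rank χ + (c : Cardinal.{w}) ≤ mu}

def vfSetoid (lam : Ordinal.{v}) (r c : ℕ) : Setoid (VF τ mu lam r c) where
  r := fun x y => ∀ (A : Struc τ) (u : Fin r → A.carrier), Sat A x.1 u ↔ Sat A y.1 u
  iseqv := ⟨fun _ _ _ => Iff.rfl, fun h A u => (h A u).symm, fun h h' A u => (h A u).trans (h' A u)⟩

def QC (lam : Ordinal.{v}) (r c : ℕ) : Type 1 := Quotient (vfSetoid τ mu lam r c)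

open Classical in
noncomputable def rebuildQF [Fintype τ.Rel] (lam : Ordinal.{v}) (r c : ℕ)
    (hne : Nonempty (VF τ mu lam r c)) (k : ℕ) (S : Set ((Atom τ (r+k)) → Bool)) :
    QC τ mu lam r c :=
  if h : TSigmaInf τ lam (exBlock k (Formula.iAnd PUnit (fun _ => dnfF τ S))) ∧
      rank (exBlock k (Formula.iAnd PUnit (fun _ => dnfF τ S))) + (c : Cardinal.{w}) ≤ mu
  then ⟦⟨_, h⟩⟧ else ⟦hne.some⟧

/-- The conjunction rebuilt from a set of tagged lower classes. -/
noncomputable def conjOf (l : Ordinal.{0}) (r c : ℕ) (k : ℕ)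
    (S : Set ((o : Set.Iio l) × QC τ mu (Ordinal.lift.{v,0} o.1) (r+k) (c+k)))
    (hsm : Small.{0} {p // p ∈ S}) : Formula τ r :=
  letI := hsm
  exBlock k (Formula.iAnd (Shrink {p // p ∈ S})
    (fun s => nnfNeg ((Quotient.out ((equivShrink {p // p ∈ S}).symm s).1.2).1)))

open Classical in
noncomputable def rebuildC (l : Ordinal.{0}) (r c : ℕ)
    (hne : Nonempty (VF τ mu (Ordinal.lift.{v,0} l) r c)) (k : ℕ)
    (S : Set ((o : Set.Iio l) × QC τ mu (Ordinal.lift.{v,0} o.1) (r+k) (c+k)))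
    (hsm : Small.{0} {p // p ∈ S}) :
    QC τ mu (Ordinal.lift.{v,0} l) r c :=
  if h : TSigmaInf τ (Ordinal.lift.{v,0} l) (conjOf τ mu l r c k S hsm) ∧
      rank (conjOf τ mu l r c k S hsm) + (c : Cardinal.{w}) ≤ mu
  then ⟦⟨_, h⟩⟧ else ⟦hne.some⟧

lemma small_QC [Fintype τ.Rel] :
    ∀ (l : Ordinal.{0}) (r c : ℕ), Small.{0} (QC τ mu (Ordinal.lift.{v,0} l) r c) := by
  intro l
  induction l using Ordinal.induction with
  | _ l IH =>
  intro r c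
  classical
  rcases isEmpty_or_nonempty (VF τ mu (Ordinal.lift.{v,0} l) r c) with hE | hNE
  · haveI : IsEmpty (QC τ mu (Ordinal.lift.{v,0} l) r c) :=
      ⟨fun q => Quotient.ind (motive := fun _ => False) (fun x => hE.false x) q⟩
    exact small_of_injective
      (f := fun q : QC τ mu (Ordinal.lift.{v,0} l) r c => (isEmptyElim q : PUnit))
      (fun q => isEmptyElim q)
  · haveI hQsmall : ∀ (o : Set.Iio l) (k : ℕ),
        Small.{0} (QC τ mu (Ordinal.lift.{v,0} o.1) (r+k) (c+k)) :=
      fun o k => IH o.1 o.2 (r+k) (c+k)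
    haveI hsig : ∀ k : ℕ, Small.{0}
        ((o : Set.Iio l) × QC τ mu (Ordinal.lift.{v,0} o.1) (r+k) (c+k)) := by
      intro k
      haveI : ∀ o : Set.Iio l, Small.{0} (QC τ mu (Ordinal.lift.{v,0} o.1) (r+k) (c+k)) :=
        fun o => hQsmall o k
      infer_instance
    haveI hTsm : Small.{0} ((ULift.{1} (Σ k : ℕ, Set ((Atom τ (r+k)) → Bool))) ⊕
        (Σ k : ℕ, Set ((o : Set.Iio l) × QC τ mu (Ordinal.lift.{v,0} o.1) (r+k) (c+k)))) := by
      infer_instance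
    refine small_of_surjective (f := fun t : (ULift.{1} (Σ k : ℕ, Set ((Atom τ (r+k)) → Bool))) ⊕
        (Σ k : ℕ, Set ((o : Set.Iio l) × QC τ mu (Ordinal.lift.{v,0} o.1) (r+k) (c+k))) =>
      Sum.elim (fun t1 => rebuildQF τ mu (Ordinal.lift.{v,0} l) r c hNE t1.down.1 t1.down.2)
        (fun t2 => rebuildC τ mu l r c hNE t2.1 t2.2 inferInstance) t) ?_
    intro q
    have hxq : ⟦Quotient.out q⟧ = q := Quotient.out_eq q
    obtain ⟨κ, hκ, hT⟩ := (Quotient.out q).2.1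
    obtain ⟨k, base, hSatEq, hRank, hbase⟩ := sigmaNF hT
    have hrkbase : rank base + (k : Cardinal.{w}) + (c : Cardinal.{w}) ≤ mu := by
      rw [← rank_exBlock]
      exact le_trans (add_le_add_left hRank _) (Quotient.out q).2.2
    have hkbud : (k : Cardinal.{w}) + (c : Cardinal.{w}) ≤ mu :=
      le_trans (add_le_add_left le_add_self _) hrkbase
    rcases hbase with ⟨hqf, _⟩ | ⟨I, f, hfeq, hI, lam', hlt, hTPi⟩
    · refine ⟨Sum.inl ⟨⟨k, {d | ∃ (A : Struc τ) (u : Fin (r+k) → A.carrier),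
        diag A u = d ∧ Sat A base u}⟩⟩, ?_⟩
      show rebuildQF τ mu (Ordinal.lift.{v,0} l) r c hNE k
        {d | ∃ (A : Struc τ) (u : Fin (r+k) → A.carrier), diag A u = d ∧ Sat A base u} = q
      unfold rebuildQF
      have hcl : TSigmaInf τ (Ordinal.lift.{v,0} l)
          (exBlock k (Formula.iAnd PUnit (fun _ => dnfF τ
            {d | ∃ (A : Struc τ) (u : Fin (r+k) → A.carrier), diag A u = d ∧ Sat A base u}))) :=
        ⟨ℵ₀, le_rfl, TSigma.exBlock' k (wrapQF_class Cardinal.one_lt_aleph0 (isQF_dnfF _))⟩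
      have hrk2 : rank (exBlock k (Formula.iAnd PUnit (fun _ => dnfF τ
            {d | ∃ (A : Struc τ) (u : Fin (r+k) → A.carrier), diag A u = d ∧ Sat A base u})))
            + (c : Cardinal.{w}) ≤ mu := by
        rw [rank_exBlock, rank_iAnd_punit, (isQF_dnfF _).rank_zero, zero_add]
        exact hkbud
      refine (dif_pos (⟨hcl, hrk2⟩ : _ ∧ _)).trans (Eq.trans ?_ hxq)
      apply Quotient.sound
      intro A u
      rw [sat_exBlock, hSatEq A u, sat_exBlock]
      refine exists_congr fun w => ?_
      rw [sat_iAnd_punit, sat_dnfF]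
      constructor
      · rintro ⟨A', u', hdg, hsat'⟩
        exact (diag_eq_qf hdg hqf).1 hsat'
      · intro hsat
        exact ⟨A, Fin.append u w, rfl, hsat⟩
    · subst hfeq
      have hch : ∀ i : I, ∃ li : Ordinal.{0}, li < l ∧ TPi τ κ (Ordinal.lift.{v,0} li) (f i) := by
        intro i
        obtain ⟨li, hTP, hle⟩ := (canonLevel (f i)).2 (hTPi i)
        exact ⟨li, Ordinal.lift_lt.1 (lt_of_le_of_lt hle (hlt i)), hTP⟩
      choose ls hls hTPl using hch
      have hchr : ∀ i, rank (nnfNeg (f i)) + ((c+k : ℕ) : Cardinal.{w}) ≤ mu := by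
        intro i
        rw [rank_nnfNeg]
        have hfle : rank.{w} (f i) ≤ rank.{w} (Formula.iAnd I f) := by
          rw [rank_iAnd]
          exact le_ciSup (Cardinal.bddAbove_range _) i
        calc rank (f i) + ((c+k : ℕ) : Cardinal.{w})
            ≤ rank (Formula.iAnd I f) + ((c+k : ℕ) : Cardinal.{w}) := add_le_add_left hfle _
          _ = rank (Formula.iAnd I f) + ((k : Cardinal.{w}) + (c : Cardinal.{w})) := by push_cast; ring
          _ = rank (Formula.iAnd I f) + (k : Cardinal.{w}) + (c : Cardinal.{w}) := by rw [add_assoc]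
          _ ≤ mu := hrkbase
      have hchc : ∀ i : I, TSigmaInf τ (Ordinal.lift.{v,0} (ls i)) (nnfNeg (f i)) :=
        fun i => ⟨κ, hκ, (classDual (f i)).2 (hTPl i)⟩
      refine ⟨Sum.inr ⟨k, Set.range (fun i : I =>
        (⟨⟨ls i, hls i⟩, ⟦(⟨nnfNeg (f i), hchc i, hchr i⟩ :
          VF τ mu (Ordinal.lift.{v,0} (ls i)) (r+k) (c+k))⟧⟩ :
          (o : Set.Iio l) × QC τ mu (Ordinal.lift.{v,0} o.1) (r+k) (c+k)))⟩, ?_⟩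
      show rebuildC τ mu l r c hNE k _ inferInstance = q
      unfold rebuildC
      set S := Set.range (fun i : I =>
        (⟨⟨ls i, hls i⟩, ⟦(⟨nnfNeg (f i), hchc i, hchr i⟩ :
          VF τ mu (Ordinal.lift.{v,0} (ls i)) (r+k) (c+k))⟧⟩ :
          (o : Set.Iio l) × QC τ mu (Ordinal.lift.{v,0} o.1) (r+k) (c+k))) with hSdef
      letI hsmS : Small.{0} {p // p ∈ S} := inferInstance
      have hκf : ∀ p : {p // p ∈ S}, ∃ κp : Cardinal.{0}, ℵ₀ ≤ κp ∧
          TSigma τ κp (Ordinal.lift.{v,0} p.1.1.1) ((Quotient.out p.1.2).1) :=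
        fun p => (Quotient.out p.1.2).2.1
      choose κf hκf1 hκf2 using hκf
      have hcl : TSigmaInf τ (Ordinal.lift.{v,0} l) (conjOf τ mu l r c k S inferInstance) := by
        refine ⟨(ℵ₀ ⊔ Order.succ (Cardinal.mk (Shrink {p // p ∈ S}))) ⊔
          ⨆ s : Shrink {p // p ∈ S}, κf ((equivShrink {p // p ∈ S}).symm s),
          le_trans le_sup_left le_sup_left, TSigma.exBlock' k (TSigma.conj _ _ ?_
          (fun s => Ordinal.lift.{v,0} ((equivShrink {p // p ∈ S}).symm s).1.1.1)
          (fun s => Ordinal.lift_lt.2 ((equivShrink {p // p ∈ S}).symm s).1.1.2)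
          (fun s => ?_))⟩
        · exact lt_of_lt_of_le (Order.lt_succ _) (le_trans le_sup_right le_sup_left)
        · refine (classMono _ ?_).2 ((classDual _).1 (hκf2 ((equivShrink {p // p ∈ S}).symm s)))
          exact le_trans (le_ciSup (Cardinal.bddAbove_range _) s) le_sup_right
      have hrk2 : rank (conjOf τ mu l r c k S inferInstance) + (c : Cardinal.{w}) ≤ mu := by
        unfold conjOf
        rw [rank_exBlock, rank_iAnd, add_assoc]
        have := iSup_add_le_card (fun s : Shrink {p // p ∈ S} =>
          rank (nnfNeg ((Quotient.out ((equivShrink {p // p ∈ S}).symm s).1.2).1)))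
          ((k : Cardinal.{w}) + c) mu hkbud (fun s => by
            show rank (nnfNeg ((Quotient.out ((equivShrink {p // p ∈ S}).symm s).1.2).1))
              + ((k : Cardinal.{w}) + c) ≤ mu
            rw [rank_nnfNeg]
            have h2 := (Quotient.out ((equivShrink {p // p ∈ S}).symm s).1.2).2.2
            refine le_trans (le_of_eq ?_) h2
            push_cast
            ring)
        simpa using this
      refine (dif_pos (⟨hcl, hrk2⟩ : _ ∧ _)).trans (Eq.trans ?_ hxq)
      apply Quotient.sound
      intro A u
      unfold conjOf
      rw [sat_exBlock, hSatEq A u, sat_exBlock]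
      refine exists_congr fun w => ?_
      rw [sat_iAnd, sat_iAnd]
      have key : ∀ (i : I) (u' : Fin (r+k) → A.carrier),
          Sat A (nnfNeg ((Quotient.out
            (⟦(⟨nnfNeg (f i), hchc i, hchr i⟩ :
              VF τ mu (Ordinal.lift.{v,0} (ls i)) (r+k) (c+k))⟧ :
              QC τ mu (Ordinal.lift.{v,0} (ls i)) (r+k) (c+k))).1)) u'
          ↔ Sat A (f i) u' := by
        intro i u'
        have hrel := Quotient.mk_out (s := vfSetoid τ mu (Ordinal.lift.{v,0} (ls i)) (r+k) (c+k))
          (⟨nnfNeg (f i), hchc i, hchr i⟩ : VF τ mu (Ordinal.lift.{v,0} (ls i)) (r+k) (c+k))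
        rw [sat_nnfNeg, hrel A u', sat_nnfNeg, not_not]
      constructor
      · intro hall i
        have := hall (equivShrink {p // p ∈ S} ⟨_, Set.mem_range_self i⟩)
        rw [Equiv.symm_apply_apply] at this
        exact (key i _).1 this
      · intro hall s
        rcases hps : (equivShrink {p // p ∈ S}).symm s with ⟨p, hp⟩
        obtain ⟨i, rfl⟩ := hp
        exact (key i _).2 (hall i)

end Family


section Beta

open Classical in
/-- Canonical Boolean pattern of a pair of predicate families. -/
noncomputable def patt {I : Type} (P₁ P₂ : I → Prop) : I × Fin 2 → Bool :=
  fun v => if v.2 = 0 then (if P₁ v.1 then true else false) else (if P₂ v.1 then true else false)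

lemma patt0 {I : Type} (P₁ P₂ : I → Prop) (i : I) : patt P₁ P₂ (i, 0) = true ↔ P₁ i := by
  unfold patt
  rw [if_pos rfl]
  split <;> simp [*]

lemma patt1 {I : Type} (P₁ P₂ : I → Prop) (i : I) : patt P₁ P₂ (i, 1) = true ↔ P₂ i := by
  unfold patt
  rw [if_neg (fun hc => absurd (show (1 : Fin 2) = 0 from hc) (by decide))]
  split <;> simp [*]

lemma patt_unique {I : Type} {P₁ P₂ : I → Prop} {ζ : I × Fin 2 → Bool}
    (h0 : ∀ i, ζ (i, 0) = true ↔ P₁ i) (h1 : ∀ i, ζ (i, 1) = true ↔ P₂ i) :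
    ζ = patt P₁ P₂ := by
  funext v
  rcases v with ⟨i, j⟩
  fin_cases j
  · have ha := h0 i
    have hb := patt0 P₁ P₂ i
    rcases hζ : ζ (i, 0) with _ | _ <;> rcases hp : patt P₁ P₂ (i, 0) with _ | _ <;>
      simp_all
  · have ha := h1 i
    have hb := patt1 P₁ P₂ i
    rcases hζ : ζ (i, 1) with _ | _ <;> rcases hp : patt P₁ P₂ (i, 1) with _ | _ <;>
      simp_all

/-- Disjunction over a set of accepted assignments. -/
def bigBeta {V : Type} (S : Set (V → Bool)) : PropForm V :=
  .iOr {p // p ∈ S} (fun p => .iAnd V (fun v => if p.1 v then .var v else .not (.var v)))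

lemma eval_bigBeta {V : Type} {S : Set (V → Bool)} {ζ : V → Bool} :
    (bigBeta S).eval ζ ↔ ζ ∈ S := by
  unfold bigBeta
  show (∃ p : {p // p ∈ S}, PropForm.eval ζ _) ↔ _
  constructor
  · rintro ⟨⟨p, hp⟩, hall⟩
    have : ζ = p := by
      funext v
      have hv : PropForm.eval ζ (if p v = true then PropForm.var v else (PropForm.var v).not) :=
        hall v
      rcases hpv : p v with _ | _
      · rw [hpv, if_neg (by simp)] at hv
        have h6 : ¬ (ζ v = true) := hv
        simpa using h6
      · rw [hpv, if_pos rfl] at hv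
        exact hv
    rw [this]
    exact hp
  · intro h
    refine ⟨⟨ζ, h⟩, fun v => ?_⟩
    show PropForm.eval ζ (if ζ v = true then PropForm.var v else (PropForm.var v).not)
    rcases hv : ζ v with _ | _
    · rw [if_neg (by simp)]
      show ¬ (ζ v = true)
      simp [hv]
    · rw [if_pos rfl]
      exact hv

/-- Substitute each variable by its negation. -/
def PropForm.substNeg {V : Type} : PropForm V → PropForm V
  | .var v => .not (.var v)
  | .not p => .not p.substNeg
  | .iAnd I f => .iAnd I (fun i => (f i).substNeg)
  | .iOr I f => .iOr I (fun i => (f i).substNeg)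

lemma eval_substNeg {V : Type} (ζ : V → Bool) :
    ∀ p : PropForm V, p.substNeg.eval ζ ↔ p.eval (fun v => !ζ v) := by
  intro p
  induction p with
  | var v =>
      show ¬ (ζ v = true) ↔ ((!ζ v) = true)
      rcases h : ζ v with _ | _ <;> simp [h]
  | not p ih =>
      show ¬ _ ↔ ¬ _
      exact not_congr ih
  | iAnd I f ih => exact forall_congr' ih
  | iOr I f ih => exact exists_congr ih

end Beta

section Assembly
universe v w
variable {τ : Vocab}

lemma empty_fun_eq {α : Type} (f g : Fin 0 → α) : f = g := funext fun i => i.elim0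

lemma sigma_branch [Fintype τ.Rel] (lam : Ordinal.{v}) (μ : Cardinal.{w})
    (Ξ : QFInterp (annotV τ) τ) (φ : Formula τ 0)
    (hφ : TSigmaInf τ lam φ) (hr : rank φ ≤ μ) :
    ∃ D : RedSeq τ 0 0,
      (∀ i, TSigmaInf τ lam (D.Δ₁ i) ∧ rank (D.Δ₁ i) ≤ μ) ∧
      (∀ i, TSigmaInf τ lam (D.Δ₂ i) ∧ rank (D.Δ₂ i) ≤ μ) ∧
      FVDecompOp (sumLike Ξ) φ D := by
  classical
  obtain ⟨κ, hκ, hT⟩ := hφ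
  obtain ⟨l₀, hT0, hle0⟩ := (canonLevel φ).1 hT
  haveI hsm : ∀ o : Set.Iio (l₀+1), Small.{0} (QC τ μ (Ordinal.lift.{v,0} o.1) 0 0) :=
    fun o => small_QC τ μ o.1 0 0
  haveI hsmX : Small.{0} ((o : Set.Iio (l₀+1)) × QC τ μ (Ordinal.lift.{v,0} o.1) 0 0) :=
    inferInstance
  have hraise : ∀ x : (o : Set.Iio (l₀+1)) × QC τ μ (Ordinal.lift.{v,0} o.1) 0 0,
      ∃ χ' : Formula τ 0, TSigmaInf τ lam χ' ∧ rank χ' ≤ μ ∧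
      ∀ (A : Struc τ) (u : Fin 0 → A.carrier), Sat A χ' u ↔ Sat A (Quotient.out x.2).1 u := by
    intro x
    have hx1 : x.1.1 ≤ l₀ := Order.lt_succ_iff.1 (by
      rw [← Ordinal.add_one_eq_succ]
      exact x.1.2)
    have hlift_le : Ordinal.lift.{v,0} x.1.1 ≤ lam := le_trans (Ordinal.lift_le.2 hx1) hle0
    obtain ⟨χ', h1, h2, h3⟩ := liftLevel hlift_le (Quotient.out x.2).2.1
    refine ⟨χ', h1, le_trans h2 ?_, h3⟩
    have h4 := (Quotient.out x.2).2.2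
    simpa using h4
  choose Δx hΔ1 hΔ2 hΔ3 using hraise
  refine ⟨⟨Shrink ((o : Set.Iio (l₀+1)) × QC τ μ (Ordinal.lift.{v,0} o.1) 0 0),
    fun i => Δx ((equivShrink _).symm i), fun i => Δx ((equivShrink _).symm i),
    bigBeta {p | ∃ X₁ X₂ : Struc τ,
      (∀ i, p (i, 0) = true ↔ Sat X₁ (Δx ((equivShrink _).symm i)) emptyA) ∧
      (∀ i, p (i, 1) = true ↔ Sat X₂ (Δx ((equivShrink _).symm i)) emptyA) ∧
      Sat (sumLike Ξ X₁ X₂) φ emptyA}⟩,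
    fun i => ⟨hΔ1 ((equivShrink _).symm i), hΔ2 ((equivShrink _).symm i)⟩,
    fun i => ⟨hΔ1 ((equivShrink _).symm i), hΔ2 ((equivShrink _).symm i)⟩, ?_⟩
  intro A₁ A₂
  constructor
  · intro hsat
    refine ⟨patt (fun i => Sat A₁ (Δx ((equivShrink _).symm i)) emptyA)
      (fun i => Sat A₂ (Δx ((equivShrink _).symm i)) emptyA), ?_,
      fun i => patt0 _ _ i, fun i => patt1 _ _ i⟩
    exact eval_bigBeta.2 ⟨A₁, A₂, fun i => patt0 _ _ i, fun i => patt1 _ _ i, hsat⟩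
  · rintro ⟨ζ, hev, h0, h1⟩
    obtain ⟨X₁, X₂, g0, g1, hX⟩ := eval_bigBeta.1 hev
    have e1 : ∀ i, Sat X₁ (Δx ((equivShrink _).symm i)) emptyA ↔
        Sat A₁ (Δx ((equivShrink _).symm i)) emptyA :=
      fun i => (g0 i).symm.trans (h0 i)
    have e2 : ∀ i, Sat X₂ (Δx ((equivShrink _).symm i)) emptyA ↔
        Sat A₂ (Δx ((equivShrink _).symm i)) emptyA :=
      fun i => (g1 i).symm.trans (h1 i)
    have hagree : ∀ (Y Z : Struc τ),
        (∀ i, Sat Y (Δx ((equivShrink _).symm i)) emptyA ↔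
          Sat Z (Δx ((equivShrink _).symm i)) emptyA) →
        ∀ lam' ≤ Ordinal.lift.{v,0} l₀, ∀ χ : Formula τ 0, TSigmaInf τ lam' χ →
          rank χ + ((0:ℕ) : Cardinal.{w}) ≤ μ → (Sat Y χ emptyA ↔ Sat Z χ emptyA) := by
      intro Y Z he lam' hle χ hχ hrk
      obtain ⟨κ', hκ', hT'⟩ := hχ
      obtain ⟨lχ, hTχ, hleχ⟩ := (canonLevel χ).1 hT'
      have hlχ : lχ < l₀ + 1 := by
        have h5 : Ordinal.lift.{v,0} lχ ≤ Ordinal.lift.{v,0} l₀ := le_trans hleχ hle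
        rw [Ordinal.lift_le] at h5
        rw [Ordinal.add_one_eq_succ]
        exact Order.lt_succ_iff.2 h5
      have hbud : rank χ + ((0:ℕ) : Cardinal.{w}) ≤ μ := hrk
      have hout := Quotient.mk_out (s := vfSetoid τ μ (Ordinal.lift.{v,0} lχ) 0 0)
        (⟨χ, ⟨κ', hκ', hTχ⟩, hbud⟩ : VF τ μ (Ordinal.lift.{v,0} lχ) 0 0)
      have hΔχ : ∀ (B : Struc τ),
          Sat B (Δx ((equivShrink _).symm (equivShrink _
            (⟨⟨lχ, hlχ⟩, ⟦(⟨χ, ⟨κ', hκ', hTχ⟩, hbud⟩ : VF τ μ (Ordinal.lift.{v,0} lχ) 0 0)⟧⟩ :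
              (o : Set.Iio (l₀+1)) × QC τ μ (Ordinal.lift.{v,0} o.1) 0 0)))) emptyA
            ↔ Sat B χ emptyA := by
        intro B
        rw [Equiv.symm_apply_apply]
        rw [hΔ3 _ B emptyA]
        exact hout B emptyA
      rw [← hΔχ Y, ← hΔχ Z]
      exact he _
    have tr1 : TrS μ (Ordinal.lift.{v,0} l₀) 0 X₁ A₁
        (emptyA : Fin 0 → X₁.carrier) (emptyA : Fin 0 → A₁.carrier) :=
      fun lam' hle χ hχ hrk hs => (hagree X₁ A₁ e1 lam' hle χ hχ hrk).1 hs
    have tr2 : TrS μ (Ordinal.lift.{v,0} l₀) 0 X₂ A₂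
        (emptyA : Fin 0 → X₂.carrier) (emptyA : Fin 0 → A₂.carrier) :=
      fun lam' hle χ hχ hrk hs => (hagree X₂ A₂ e2 lam' hle χ hχ hrk).1 hs
    have hU1 : ∀ i : Fin 0, Sat (adu X₁ X₂) Ξ.xiU
        (fun _ => mix (fun j : Fin 0 => j.elim0) (emptyA : Fin 0 → X₁.carrier)
          (emptyA : Fin 0 → X₂.carrier) i) := fun i => i.elim0
    have hU2 : ∀ i : Fin 0, Sat (adu A₁ A₂) Ξ.xiU
        (fun _ => mix (fun j : Fin 0 => j.elim0) (emptyA : Fin 0 → A₁.carrier)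
          (emptyA : Fin 0 → A₂.carrier) i) := fun i => i.elim0
    have hX' : Sat (Ξ.app (adu X₁ X₂)) φ
        (fun i => ⟨mix (fun j : Fin 0 => j.elim0) (emptyA : Fin 0 → X₁.carrier)
          (emptyA : Fin 0 → X₂.carrier) i, hU1 i⟩) := by
      have h7 := hX
      rw [empty_fun_eq (emptyA : Fin 0 → (sumLike Ξ X₁ X₂).carrier)
        (fun i => ⟨mix (fun j : Fin 0 => j.elim0) (emptyA : Fin 0 → X₁.carrier)
          (emptyA : Fin 0 → X₂.carrier) i, hU1 i⟩)] at h7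
      exact h7
    have step := mainTransfer Ξ μ (Ordinal.lift.{v,0} l₀) φ κ hT0 0 (by simpa using hr)
      (fun j : Fin 0 => j.elim0) X₁ X₂ A₁ A₂ emptyA emptyA emptyA emptyA tr1 tr2 hU1 hU2 hX'
    show Sat (Ξ.app (adu A₁ A₂)) φ emptyA
    rw [empty_fun_eq (emptyA : Fin 0 → (Ξ.app (adu A₁ A₂)).carrier)
      (fun i => ⟨mix (fun j : Fin 0 => j.elim0) (emptyA : Fin 0 → A₁.carrier)
        (emptyA : Fin 0 → A₂.carrier) i, hU2 i⟩)]
    exact step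

end Assembly


section PiBranch
universe v w
variable {τ : Vocab}

lemma not_bool_eq_true_iff (a : Bool) {P : Prop} (h : a = true ↔ P) :
    ((!a) = true ↔ ¬ P) := by
  rcases a with _ | _ <;> simp_all

lemma bool_eq_not {a b : Bool} {P : Prop} (ha : a = true ↔ P) (hb : b = true ↔ ¬ P) :
    a = !b := by
  rcases a with _ | _ <;> rcases b with _ | _ <;> simp_all

lemma pi_branch [Fintype τ.Rel] (lam : Ordinal.{v}) (μ : Cardinal.{w})
    (Ξ : QFInterp (annotV τ) τ) (φ : Formula τ 0)
    (hφ : TPiInf τ lam φ) (hr : rank φ ≤ μ) :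
    ∃ D : RedSeq τ 0 0,
      (∀ i, TPiInf τ lam (D.Δ₁ i) ∧ rank (D.Δ₁ i) ≤ μ) ∧
      (∀ i, TPiInf τ lam (D.Δ₂ i) ∧ rank (D.Δ₂ i) ≤ μ) ∧
      FVDecompOp (sumLike Ξ) φ D := by
  obtain ⟨D, hD1, hD2, hFV⟩ := sigma_branch lam μ Ξ (nnfNeg φ) hφ.nnfNeg'
    (by rw [rank_nnfNeg]; exact hr)
  refine ⟨⟨D.I, fun i => nnfNeg (D.Δ₁ i), fun i => nnfNeg (D.Δ₂ i), .not (D.β.substNeg)⟩,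
    fun i => ⟨(hD1 i).1.nnfNeg', by rw [rank_nnfNeg]; exact (hD1 i).2⟩,
    fun i => ⟨(hD2 i).1.nnfNeg', by rw [rank_nnfNeg]; exact (hD2 i).2⟩, ?_⟩
  intro A₁ A₂
  have hneg : Sat (sumLike Ξ A₁ A₂) φ emptyA ↔
      ¬ Sat (sumLike Ξ A₁ A₂) (nnfNeg φ) emptyA := by
    rw [sat_nnfNeg, not_not]
  rw [hneg, hFV A₁ A₂]
  constructor
  · intro hnm
    refine ⟨fun v => ! (patt (fun i => Sat A₁ (D.Δ₁ i) emptyA)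
      (fun i => Sat A₂ (D.Δ₂ i) emptyA) v), ?_, ?_, ?_⟩
    · show ¬ PropForm.eval _ (D.β.substNeg)
      rw [eval_substNeg]
      intro hevB
      rw [show (fun v => !(!(patt (fun i => Sat A₁ (D.Δ₁ i) emptyA)
          (fun i => Sat A₂ (D.Δ₂ i) emptyA) v)))
        = patt (fun i => Sat A₁ (D.Δ₁ i) emptyA) (fun i => Sat A₂ (D.Δ₂ i) emptyA)
        from funext fun v => Bool.not_not _] at hevB
      exact hnm ⟨_, hevB, fun i => patt0 _ _ i, fun i => patt1 _ _ i⟩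
    · intro i
      rw [sat_nnfNeg]
      exact not_bool_eq_true_iff _ (patt0 _ _ i)
    · intro i
      rw [sat_nnfNeg]
      exact not_bool_eq_true_iff _ (patt1 _ _ i)
  · rintro ⟨ζ', hev', h0', h1'⟩ hm
    obtain ⟨ζ, hevB, k0, k1⟩ := hm
    have hζ : ζ = fun v => !(ζ' v) := by
      funext v
      rcases v with ⟨i, j⟩
      fin_cases j
      · exact bool_eq_not (k0 i) ((h0' i).trans (sat_nnfNeg _ _))
      · exact bool_eq_not (k1 i) ((h1' i).trans (sat_nnfNeg _ _))
    apply hev'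
    show PropForm.eval ζ' (D.β.substNeg)
    rw [eval_substNeg]
    rw [← hζ]
    exact hevB

end PiBranch

/-- For L one of tΣ_{∞,λ}[μ] or tΠ_{∞,λ}[μ] over τ and ⊛ a quantifier-free
sum-like binary operation on τ-structures, every L sentence φ has an L reduction sequence that is
a Feferman–Vaught decomposition of φ over ⊛. -/
theorem stmt4 (τ : Vocab) [Fintype τ.Rel] (lam : Ordinal) (μ : Cardinal)
    (Ξ : QFInterp (annotV τ) τ) (φ : Formula τ 0) :
    (TSigmaInf τ lam φ → rank φ ≤ μ →
      ∃ D : RedSeq τ 0 0,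
        (∀ i, TSigmaInf τ lam (D.Δ₁ i) ∧ rank (D.Δ₁ i) ≤ μ) ∧
        (∀ i, TSigmaInf τ lam (D.Δ₂ i) ∧ rank (D.Δ₂ i) ≤ μ) ∧
        FVDecompOp (sumLike Ξ) φ D) ∧
    (TPiInf τ lam φ → rank φ ≤ μ →
      ∃ D : RedSeq τ 0 0,
        (∀ i, TPiInf τ lam (D.Δ₁ i) ∧ rank (D.Δ₁ i) ≤ μ) ∧
        (∀ i, TPiInf τ lam (D.Δ₂ i) ∧ rank (D.Δ₂ i) ≤ μ) ∧
        FVDecompOp (sumLike Ξ) φ D) := by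
  constructor
  · intro h1 h2
    exact sigma_branch lam μ Ξ φ h1 h2
  · intro h1 h2
    exact pi_branch lam μ Ξ φ h1 h2

end FV
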